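/- arXiv:math/0612753 — 3 statements merged into one kernel-verified Lean document; each statement's English description precedes it below -/
import Mathlib

section
/- Assume the Continuum Hypothesis. Then there exists a subgroup G of the Baire group ℤ^ℕ (the countable product of copies of the discrete group of integers, with the product topology) such that G is Menger-bounded but the group G × G is not Menger-bounded. -/
open Set Filter Pointwise

/-- A topological (additive) group is Menger-bounded (o-bounded) if for every sequence
of neighborhoods of the identity there are finite sets `F n` with `G = ⋃ n, F n + U n`. -/
def MengerBounded (G : Type*) [AddGroup G] [TopologicalSpace G] : Prop :=
  ∀ U : ℕ → Set G, (∀ n, U n ∈ nhds (0 : G)) →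
    ∃ F : ℕ → Set G, (∀ n, (F n).Finite) ∧ (⋃ n, (F n + U n)) = univ

namespace MBaux

noncomputable section

open Classical

abbrev Seq := ℕ → ℤ

def R (w : Seq) (n : ℕ) : ℕ := (Finset.range (n+1)).sup fun i => (w i).natAbs

lemma natAbs_le_R (w : Seq) {i n : ℕ} (h : i ≤ n) : (w i).natAbs ≤ R w n := by
  unfold R
  exact Finset.le_sup (f := fun i => (w i).natAbs) (Finset.mem_range.mpr (by omega))

lemma R_mono (w : Seq) : Monotone (R w) := fun _ _ h =>
  Finset.sup_mono (Finset.range_subset_range.mpr (by omega))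

lemma R_le_iff {w : Seq} {n B : ℕ} : R w n ≤ B ↔ ∀ i ≤ n, (w i).natAbs ≤ B := by
  rw [R, Finset.sup_le_iff]
  constructor
  · intro H i hi; exact H i (Finset.mem_range.mpr (by omega))
  · intro H i hi; exact H i (by simpa [Nat.lt_succ_iff] using hi)

lemma R_zero_fun (n : ℕ) : R 0 n = 0 := by
  simp [R]

lemma R_add_le (v w : Seq) (n : ℕ) : R (v + w) n ≤ R v n + R w n := by
  rw [R_le_iff]
  intro i hi
  calc ((v + w) i).natAbs = (v i + w i).natAbs := rfl
    _ ≤ (v i).natAbs + (w i).natAbs := Int.natAbs_add_le _ _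
    _ ≤ R v n + R w n := Nat.add_le_add (natAbs_le_R v hi) (natAbs_le_R w hi)

lemma R_eq_of_agree {v w : Seq} {n : ℕ} (h : ∀ i ≤ n, v i = w i) : R v n = R w n := by
  unfold R
  apply Finset.sup_congr rfl
  intro i hi
  rw [h i (by simpa [Nat.lt_succ_iff] using hi)]

def cb (d : ℤ × ℤ) (p : Seq × Seq) : Seq := d.1 • p.1 + d.2 • p.2

lemma cb_apply (d : ℤ × ℤ) (p : Seq × Seq) (n : ℕ) :
    cb d p n = d.1 * p.1 n + d.2 * p.2 n := rfl

lemma cb_zero (p : Seq × Seq) : cb 0 p = 0 := by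
  funext n; simp [cb]

lemma cb_add (d e : ℤ × ℤ) (p : Seq × Seq) : cb (d + e) p = cb d p + cb e p := by
  funext n; simp [cb_apply]; ring

lemma cb_neg (d : ℤ × ℤ) (p : Seq × Seq) : cb (-d) p = -(cb d p) := by
  funext n; simp [cb_apply]; ring

lemma countable_finsets {α : Type*} {s : Set α} (hs : s.Countable) :
    {F : Finset α | ↑F ⊆ s}.Countable := by
  have h1 : {t : Set α | t.Finite ∧ t ⊆ s}.Countable := Set.countable_setOf_finite_subset hs
  have h2 : {F : Finset α | ↑F ⊆ s} ⊆ (fun F : Finset α => (↑F : Set α)) ⁻¹' {t | t.Finite ∧ t ⊆ s} := by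
    intro F hF
    exact ⟨F.finite_toSet, hF⟩
  exact (h1.preimage Finset.coe_injective).mono h2

def lookup (Γ : Finset ((Seq × Seq) × (ℤ × ℤ))) (p : Seq × Seq) : ℤ × ℤ :=
  (Γ.filter (fun e => e.1 = p)).sum (fun e => e.2)

lemma lookup_image (F : Finset (Seq × Seq)) (dd : Seq × Seq → ℤ × ℤ) {p : Seq × Seq}
    (hp : p ∈ F) : lookup (F.image (fun p' => (p', dd p'))) p = dd p := by
  unfold lookup
  have : (F.image (fun p' => (p', dd p'))).filter (fun e => e.1 = p) = {(p, dd p)} := by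
    ext e
    simp only [Finset.mem_filter, Finset.mem_image, Finset.mem_singleton]
    constructor
    · rintro ⟨⟨p', hp', rfl⟩, h2⟩
      simp only at h2
      subst h2; rfl
    · rintro rfl
      exact ⟨⟨p, hp, rfl⟩, rfl⟩
  rw [this, Finset.sum_singleton]



def Inv (P : Set (Seq × Seq)) : Prop :=
  ∀ F : Finset (Seq × Seq), ↑F ⊆ P → ∀ dd : Seq × Seq → ℤ × ℤ, ∀ K N : ℕ,
    ∃ q, N ≤ q ∧ ∀ p ∈ F, (K+1) * R (cb (dd p) p) q ≤ q

def Vm (m : ℕ) : Set Seq := {w | ∀ i < m, w i = 0}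

lemma Vm_mem_nhds (m : ℕ) : Vm m ∈ nhds (0 : Seq) := by
  rw [nhds_pi, Filter.mem_pi]
  refine ⟨{i | i < m}, Set.finite_Iio m, fun _ => {0}, ?_, ?_⟩
  · intro i
    simp [nhds_discrete]
  · intro w hw i him
    have := hw i him
    simpa using this

lemma exists_basic {G : AddSubgroup (ℕ → ℤ)} {U : Set ↥G} (hU : U ∈ nhds (0 : ↥G)) :
    ∃ m, {g : ↥G | ∀ i < m, (g : Seq) i = 0} ⊆ U := by
  obtain ⟨t, ht, hsub⟩ := (mem_nhds_subtype _ _ _).mp hU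
  rw [ZeroMemClass.coe_zero] at ht
  rw [nhds_pi, Filter.mem_pi] at ht
  obtain ⟨I, hIfin, s, hs, hsub2⟩ := ht
  refine ⟨hIfin.toFinset.sup id + 1, ?_⟩
  intro g hg
  apply hsub
  show (g : Seq) ∈ t
  apply hsub2
  intro i hi
  have h0 : (g : Seq) i = 0 := by
    apply hg
    have := Finset.le_sup (f := id) (hIfin.mem_toFinset.mpr hi)
    simp only [id] at this
    omega
  rw [h0]
  have := hs i
  simp [nhds_discrete] at this
  exact this

theorem menger_of_dips (G : AddSubgroup (ℕ → ℤ))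
    (h : ∀ g ∈ G, ∀ N : ℕ, ∃ q, N ≤ q ∧ R g q ≤ q) : MengerBounded G := by
  intro U hU
  have hbasic : ∀ n, ∃ m, {g : ↥G | ∀ i < m, (g : Seq) i = 0} ⊆ U n :=
    fun n => exists_basic (hU n)
  choose m hm using hbasic
  by_cases hB : ∃ K, {n | m n ≤ K}.Infinite
  · obtain ⟨K, hK⟩ := hB
    set φ : ↥G → (Fin K → ℤ) := fun g i => (g : Seq) i with hφ
    have hrange : (Set.range φ).Countable := Set.to_countable _
    obtain ⟨e, he⟩ := hrange.exists_eq_range ⟨φ 0, Set.mem_range_self _⟩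
    set ν : ℕ ↪ {n | m n ≤ K} := hK.natEmbedding with hν
    have hrep : ∀ j : ℕ, ∃ g : ↥G, φ g = e j := by
      intro j
      have : e j ∈ Set.range φ := by rw [he]; exact Set.mem_range_self _
      exact this
    choose rep hrepspec using hrep
    refine ⟨fun n => {g | ∃ j, (ν j : ℕ) = n ∧ g = rep j}, ?_, ?_⟩
    · intro n
      apply Set.Subsingleton.finite
      rintro a ⟨j₁, hj₁, rfl⟩ b ⟨j₂, hj₂, rfl⟩
      have : j₁ = j₂ := ν.injective (Subtype.ext (hj₁.trans hj₂.symm))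
      rw [this]
    · rw [Set.eq_univ_iff_forall]
      intro g
      rw [Set.mem_iUnion]
      have : φ g ∈ Set.range e := by rw [← he]; exact Set.mem_range_self _
      obtain ⟨j, hj⟩ := this
      refine ⟨ν j, ?_⟩
      rw [Set.mem_add]
      refine ⟨rep j, ⟨j, rfl, rfl⟩, g - rep j, ?_, by abel⟩
      apply hm
      intro i hi
      have hiK : i < K := lt_of_lt_of_le hi (ν j).2
      have hagree : (g : Seq) i = (rep j : Seq) i := by
        have h1 : φ (rep j) = φ g := by rw [hrepspec j, hj]
        have := congrFun h1 ⟨i, hiK⟩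
        simpa [hφ] using this.symm
      show ((g : Seq) - (rep j : Seq)) i = 0
      simp [hagree]
  · push_neg at hB
    have hfin : ∀ K, {n | m n ≤ K}.Finite := by
      intro K
      have h' := hB K
      exact h'
    set ℓ : ℕ → ℕ := fun q => sSup {n | m n ≤ q + 1} with hℓdef
    have hbdd : ∀ q, BddAbove {n | m n ≤ q + 1} := fun q => (hfin (q+1)).bddAbove
    have hℓ_ge : ∀ q n, m n ≤ q + 1 → n ≤ ℓ q := fun q n hn => le_csSup (hbdd q) hn
    have hmℓ : ∀ q, m 0 ≤ q → m (ℓ q) ≤ q + 1 := by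
      intro q hq
      have : ℓ q ∈ {n | m n ≤ q + 1} :=
        Nat.sSup_mem ⟨0, by simp only [Set.mem_setOf_eq]; omega⟩ (hbdd q)
      exact this
    have hqbdd : ∀ n', BddAbove {q | ℓ q = n'} := by
      intro n'
      refine ⟨m (n' + 1), ?_⟩
      intro q hq
      by_contra hlt
      push_neg at hlt
      have : n' + 1 ≤ ℓ q := hℓ_ge q (n' + 1) (by omega)
      simp only [Set.mem_setOf_eq] at hq
      omega
    set B : ℕ → ℕ := fun n' => sSup {q | ℓ q = n'} with hBdef
    have hqB : ∀ q, q ≤ B (ℓ q) := fun q => le_csSup (hqbdd _) rfl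
    set pchoice : ∀ n : ℕ, (Fin (m n) → ℤ) → ↥G := fun n p =>
      if h' : ∃ g' : ↥G, ∀ i : Fin (m n), (g' : Seq) i = p i then h'.choose else 0
      with hpc
    refine ⟨fun n => {g : ↥G | (∀ i < m n, ((g : Seq) i).natAbs ≤ B n) ∧
        g = pchoice n (fun i : Fin (m n) => (g : Seq) i)}, ?_, ?_⟩
    · intro n
      have hsub : {g : ↥G | (∀ i < m n, ((g : Seq) i).natAbs ≤ B n) ∧
          g = pchoice n (fun i : Fin (m n) => (g : Seq) i)} ⊆
          (pchoice n) '' {p : Fin (m n) → ℤ | ∀ i, (p i).natAbs ≤ B n} := by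
        rintro g ⟨hb, hg⟩
        exact ⟨fun i : Fin (m n) => (g : Seq) i, fun i => hb i i.2, hg.symm⟩
      apply Set.Finite.subset _ hsub
      apply Set.Finite.image
      have : {p : Fin (m n) → ℤ | ∀ i, (p i).natAbs ≤ B n} ⊆
          Set.pi Set.univ (fun _ : Fin (m n) => {z : ℤ | z.natAbs ≤ B n}) := by
        intro p hp i _
        exact hp i
      apply Set.Finite.subset _ this
      apply Set.Finite.pi
      intro i
      apply Set.Finite.subset (Set.finite_Icc (-(B n : ℤ)) (B n))
      intro z hz
      simp only [Set.mem_setOf_eq] at hz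
      constructor <;> omega
    · rw [Set.eq_univ_iff_forall]
      intro g
      rw [Set.mem_iUnion]
      obtain ⟨q, hq1, hq2⟩ := h g g.property (m 0)
      set n := ℓ q with hn
      have hmn : m n ≤ q + 1 := hmℓ q hq1
      have hreal : ∃ g' : ↥G, ∀ i : Fin (m n), (g' : Seq) i = (fun i : Fin (m n) => (g : Seq) i) i :=
        ⟨g, fun i => rfl⟩
      set gr := pchoice n (fun i : Fin (m n) => (g : Seq) i) with hgr
      have hgrspec : ∀ i : Fin (m n), (gr : Seq) i = (g : Seq) i := by
        rw [hgr, hpc]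
        simp only [hreal, dif_pos]
        exact hreal.choose_spec
      refine ⟨n, ?_⟩
      rw [Set.mem_add]
      refine ⟨gr, ⟨?_, ?_⟩, g - gr, ?_, by abel⟩
      · intro i hi
        rw [hgrspec ⟨i, hi⟩]
        calc ((g : Seq) i).natAbs ≤ R g q := natAbs_le_R _ (by omega)
          _ ≤ q := hq2
          _ ≤ B n := hqB q
      · have : (fun i : Fin (m n) => (gr : Seq) i) = (fun i : Fin (m n) => (g : Seq) i) := by
          funext i; exact hgrspec i
        rw [this]
      · apply hm
        intro i hi
        show ((g : Seq) - (gr : Seq)) i = 0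
        rw [Pi.sub_apply, hgrspec ⟨i, hi⟩]
        ring

theorem not_menger_sq (G : AddSubgroup (ℕ → ℤ))
    (h : ∀ c : ℕ → ℕ, ∃ x ∈ G, ∃ y ∈ G, ∀ n, c n < max (R x n) (R y n)) :
    ¬ MengerBounded (↥G × ↥G) := by
  intro hM
  set A : ℕ → Set ↥G := fun n => {g | ∀ i < n + 1, (g : Seq) i = 0} with hA
  have hAnhds : ∀ n, A n ∈ nhds (0 : ↥G) := by
    intro n
    rw [mem_nhds_subtype]
    refine ⟨Vm (n+1), ?_, ?_⟩
    · rw [ZeroMemClass.coe_zero]; exact Vm_mem_nhds _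
    · intro g hg; exact hg
  have hU : ∀ n, A n ×ˢ A n ∈ nhds (0 : ↥G × ↥G) := by
    intro n; rw [nhds_prod_eq]; exact Filter.prod_mem_prod (hAnhds n) (hAnhds n)
  obtain ⟨F, hFfin, hFcov⟩ := hM (fun n => A n ×ˢ A n) hU
  set c : ℕ → ℕ := fun n => sSup ((fun p : ↥G × ↥G => max (R p.1 n) (R p.2 n)) '' F n) with hc
  obtain ⟨x, hx, y, hy, hxy⟩ := h c
  have hmem : (⟨⟨x, hx⟩, ⟨y, hy⟩⟩ : ↥G × ↥G) ∈ ⋃ n, (F n + (A n ×ˢ A n)) := by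
    rw [hFcov]; trivial
  rw [Set.mem_iUnion] at hmem
  obtain ⟨n, hn⟩ := hmem
  rw [Set.mem_add] at hn
  obtain ⟨a, ha, u, hu, hau⟩ := hn
  have hu1 : u.1 ∈ A n := hu.1
  have hu2 : u.2 ∈ A n := hu.2
  have hx1 : ∀ i ≤ n, x i = (a.1 : Seq) i := by
    intro i hi
    have h1 : a.1 + u.1 = ⟨x, hx⟩ := congrArg Prod.fst hau
    have h2 : (a.1 : Seq) i + (u.1 : Seq) i = x i := by
      have := congrArg (fun g : ↥G => (g : Seq) i) h1
      simpa using this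
    have h3 : (u.1 : Seq) i = 0 := hu1 i (by omega)
    omega
  have hy1 : ∀ i ≤ n, y i = (a.2 : Seq) i := by
    intro i hi
    have h1 : a.2 + u.2 = ⟨y, hy⟩ := congrArg Prod.snd hau
    have h2 : (a.2 : Seq) i + (u.2 : Seq) i = y i := by
      have := congrArg (fun g : ↥G => (g : Seq) i) h1
      simpa using this
    have h3 : (u.2 : Seq) i = 0 := hu2 i (by omega)
    omega
  have hbdd : BddAbove ((fun p : ↥G × ↥G => max (R p.1 n) (R p.2 n)) '' F n) :=
    ((hFfin n).image _).bddAbove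
  have hle : max (R (a.1 : Seq) n) (R (a.2 : Seq) n) ≤ c n :=
    le_csSup hbdd ⟨a, ha, rfl⟩
  have hRx : R x n = R (a.1 : Seq) n := R_eq_of_agree hx1
  have hRy : R y n = R (a.2 : Seq) n := R_eq_of_agree hy1
  have := hxy n
  omega

/-! stage auxiliary definitions -/

abbrev ZT := (ℤ × ℤ) × (Finset ((Seq × Seq) × (ℤ × ℤ))) × ℕ

def ZS (P : Set (Seq × Seq)) : Set ZT :=
  {z | z.1 ≠ 0 ∧ ∀ e ∈ z.2.1, e.1 ∈ P}

lemma ZS_countable {P : Set (Seq × Seq)} (hP : P.Countable) : (ZS P).Countable := by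
  have h1 : {Γ : Finset ((Seq × Seq) × (ℤ × ℤ)) | ↑Γ ⊆ P ×ˢ (univ : Set (ℤ × ℤ))}.Countable :=
    countable_finsets (hP.prod (Set.to_countable _))
  have h2 : ZS P ⊆ (univ : Set (ℤ × ℤ)) ×ˢ
      (({Γ | ↑Γ ⊆ P ×ˢ (univ : Set (ℤ × ℤ))} : Set (Finset ((Seq × Seq) × (ℤ × ℤ)))) ×ˢ
        (univ : Set ℕ)) := by
    rintro ⟨d, Γ, K⟩ ⟨_, h⟩
    refine ⟨trivial, ?_, trivial⟩
    intro e he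
    exact ⟨h e he, trivial⟩
  exact ((Set.countable_univ).prod (h1.prod (Set.countable_univ))).mono h2

lemma ZS_nonempty (P : Set (Seq × Seq)) : (ZS P).Nonempty :=
  ⟨⟨(1, 0), ∅, 0⟩, by refine ⟨by simp, ?_⟩; intro e he; simp at he⟩

def chat (c : ℕ → ℕ) (n : ℕ) : ℕ := n + 1 + (Finset.range (n+1)).sum c

lemma chat_mono (c : ℕ → ℕ) : Monotone (chat c) := by
  intro a b hab
  unfold chat
  have : (Finset.range (a+1)).sum c ≤ (Finset.range (b+1)).sum c :=
    Finset.sum_le_sum_of_subset (Finset.range_subset_range.mpr (by omega))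
  omega

lemma lt_chat (c : ℕ → ℕ) (n : ℕ) : c n < chat c n := by
  unfold chat
  have : c n ≤ (Finset.range (n+1)).sum c :=
    Finset.single_le_sum (f := c) (fun i _ => Nat.zero_le _) (Finset.self_mem_range_succ n)
  omega

def Dsup (η : ℕ → ZT) (r : ℕ) : ℕ :=
  (Finset.range (r+1)).sup fun r' => (η r').1.1.natAbs + (η r').1.2.natAbs

lemma Dsup_mono (η : ℕ → ZT) : Monotone (Dsup η) := fun _ _ h =>
  Finset.sup_mono (Finset.range_subset_range.mpr (by omega))

lemma le_Dsup (η : ℕ → ZT) {r' r : ℕ} (h : r' ≤ r) :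
    (η r').1.1.natAbs + (η r').1.2.natAbs ≤ Dsup η r := by
  unfold Dsup
  exact Finset.le_sup (f := fun r' => (η r').1.1.natAbs + (η r').1.2.natAbs)
    (Finset.mem_range.mpr (by omega))

def thr (c : ℕ → ℕ) (η : ℕ → ZT) (prev r : ℕ) : ℕ :=
  (r+2) * (Dsup η r * (chat c prev + 1) + 1) + prev + 1

def fFrec (pick : ℕ → ℕ → ℕ) : ℕ → ℕ
  | 0 => pick 0 0
  | (r+1) => pick (fFrec pick r) (r+1)

def prevOf (pick : ℕ → ℕ → ℕ) : ℕ → ℕ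
  | 0 => 0
  | (r+1) => fFrec pick r

lemma fFrec_eq (pick : ℕ → ℕ → ℕ) (r : ℕ) :
    fFrec pick r = pick (prevOf pick r) r := by
  cases r <;> rfl

theorem stage {P : Set (Seq × Seq)} (hP : P.Countable) (hInv : Inv P) (c : ℕ → ℕ) :
    ∃ xy : Seq × Seq, (∀ n, c n < max (R xy.1 n) (R xy.2 n)) ∧ Inv (insert xy P) := by
  classical
  obtain ⟨f, hf⟩ := (ZS_countable hP).exists_eq_range (ZS_nonempty P)
  set η : ℕ → ZT := fun r => f (Nat.unpair r).1 with hηdef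
  have hη : ∀ r, η r ∈ ZS P := by
    intro r
    rw [hf]
    exact Set.mem_range_self _
  -- the choice of round ends
  have ex : ∀ prev r : ℕ, ∃ q, thr c η prev r ≤ q ∧
      ∀ p ∈ ((η r).2.1).image Prod.fst,
        ((η r).2.2 + 1) * R (cb (lookup (η r).2.1 p) p) q ≤ q := by
    intro prev r
    apply hInv
    intro p hp
    simp only [Finset.coe_image, Set.mem_image, Finset.mem_coe] at hp
    obtain ⟨e, he, rfl⟩ := hp
    exact (hη r).2 e he
  choose pick hthr hquiet using ex
  set fF : ℕ → ℕ := fFrec pick with hfF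
  have hfFthr : ∀ r, thr c η (prevOf pick r) r ≤ fF r := by
    intro r
    rw [hfF, fFrec_eq]
    exact hthr _ _
  have hfFquiet : ∀ r, ∀ p ∈ ((η r).2.1).image Prod.fst,
      ((η r).2.2 + 1) * R (cb (lookup (η r).2.1 p) p) (fF r) ≤ fF r := by
    intro r
    rw [hfF, fFrec_eq]
    exact hquiet _ _
  have hthr_ge : ∀ prev r, prev + 1 ≤ thr c η prev r ∧ r ≤ thr c η prev r := by
    intro prev r
    unfold thr
    constructor
    · omega
    · nlinarith [Nat.zero_le (Dsup η r * (chat c prev + 1))]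
  have hfFsm : StrictMono fF := by
    apply strictMono_nat_of_lt_succ
    intro r
    have h1 := hfFthr (r+1)
    have h2 := (hthr_ge (prevOf pick (r+1)) (r+1)).1
    have h3 : prevOf pick (r+1) = fF r := rfl
    omega
  have hfFge : ∀ r, r ≤ fF r := fun r => hfFsm.le_apply
  have hexr : ∀ n, ∃ r, n ≤ fF r := fun n => ⟨n, hfFge n⟩
  set ρ : ℕ → ℕ := fun n => Nat.find (hexr n) with hρdef
  have hρ1 : ∀ n, n ≤ fF (ρ n) := fun n => Nat.find_spec (hexr n)
  have hρ2 : ∀ n r, n ≤ fF r → ρ n ≤ r := fun n r h => Nat.find_min' (hexr n) h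
  have hρprev : ∀ n r, ρ n < r → n ≤ prevOf pick r := by
    intro n r h
    cases r with
    | zero => omega
    | succ r' =>
      show n ≤ fF r'
      exact le_trans (hρ1 n) (hfFsm.monotone (by omega))
  -- the pair
  set x : Seq := fun n => -((η (ρ n)).1.2) * ((chat c n + 1 : ℕ) : ℤ) with hx
  set y : Seq := fun n => ((η (ρ n)).1.1) * ((chat c n + 1 : ℕ) : ℤ) with hy
  have hxabs : ∀ n, (x n).natAbs = (η (ρ n)).1.2.natAbs * (chat c n + 1) := by
    intro n
    show (-(η (ρ n)).1.2 * ((chat c n + 1 : ℕ) : ℤ)).natAbs = _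
    rw [Int.natAbs_mul, Int.natAbs_neg, Int.natAbs_natCast]
  have hyabs : ∀ n, (y n).natAbs = (η (ρ n)).1.1.natAbs * (chat c n + 1) := by
    intro n
    show ((η (ρ n)).1.1 * ((chat c n + 1 : ℕ) : ℤ)).natAbs = _
    rw [Int.natAbs_mul, Int.natAbs_natCast]
  refine ⟨(x, y), ?_, ?_⟩
  · -- coverage
    intro n
    show c n < max (R x n) (R y n)
    have hd := (hη (ρ n)).1
    have h1 : 1 ≤ (η (ρ n)).1.1.natAbs ∨ 1 ≤ (η (ρ n)).1.2.natAbs := by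
      by_contra hcon
      push_neg at hcon
      apply hd
      have e1 : (η (ρ n)).1.1 = 0 := by omega
      have e2 : (η (ρ n)).1.2 = 0 := by omega
      exact Prod.ext e1 e2
    have hc := lt_chat c n
    have hX : (x n).natAbs ≤ R x n := natAbs_le_R x (le_refl n)
    have hY : (y n).natAbs ≤ R y n := natAbs_le_R y (le_refl n)
    rw [hxabs] at hX
    rw [hyabs] at hY
    rcases h1 with h1 | h1
    · have h2 : chat c n + 1 ≤ (η (ρ n)).1.1.natAbs * (chat c n + 1) :=
        Nat.le_mul_of_pos_left _ (by omega)
      have : chat c n + 1 ≤ R y n := le_trans h2 hY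
      omega
    · have h2 : chat c n + 1 ≤ (η (ρ n)).1.2.natAbs * (chat c n + 1) :=
        Nat.le_mul_of_pos_left _ (by omega)
      have : chat c n + 1 ≤ R x n := le_trans h2 hX
      omega
  · -- the invariant
    intro F hF dd K N
    by_cases hxyF : (x, y) ∈ F
    · set F' := F.erase (x, y) with hF'
      have hF'P : ∀ p ∈ F', p ∈ P := by
        intro p hp
        have h1 : p ≠ (x, y) := Finset.ne_of_mem_erase hp
        have h2 : p ∈ insert (x, y) P := hF (Finset.mem_of_mem_erase hp)
        rcases h2 with h2 | h2
        · exact absurd h2 h1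
        · exact h2
      set ab := dd (x, y) with hab
      set dir : ℤ × ℤ := if ab = 0 then (1, 0) else ab with hdir
      have hdirne : dir ≠ 0 := by
        rw [hdir]
        split
        · simp
        · assumption
      set Γ : Finset ((Seq × Seq) × (ℤ × ℤ)) := F'.image (fun p' => (p', dd p')) with hΓ
      have hzZS : (⟨dir, Γ, K⟩ : ZT) ∈ ZS P := by
        refine ⟨hdirne, ?_⟩
        intro e he
        rw [hΓ] at he
        simp only [Finset.mem_image] at he
        obtain ⟨p', hp', rfl⟩ := he
        exact hF'P p' hp'
      obtain ⟨k, hk⟩ : (⟨dir, Γ, K⟩ : ZT) ∈ Set.range f := by rw [← hf]; exact hzZS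
      set s := ab.1.natAbs + ab.2.natAbs with hs
      set M := max (max N 1) ((K+1) * s) with hM
      set r := Nat.pair k M with hr
      have hηr : η r = ⟨dir, Γ, K⟩ := by
        rw [hηdef]
        simp only [hr, Nat.unpair_pair]
        exact hk
      have hrM : M ≤ r := Nat.right_le_pair k M
      have hr1 : 1 ≤ r := le_trans (le_trans (le_max_right N 1) (le_max_left _ _)) hrM
      refine ⟨fF r, ?_, ?_⟩
      · -- N ≤ fF r
        have : N ≤ r := le_trans (le_trans (le_max_left N 1) (le_max_left _ _)) hrM
        exact le_trans this (hfFge r)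
      · intro p hp
        by_cases hpxy : p = (x, y)
        · -- own term
          subst hpxy
          rw [← hab]
          by_cases hab0 : ab = 0
          · rw [hab0, cb_zero, R_zero_fun]
            simp
          · have hdireq : dir = ab := by rw [hdir, if_neg hab0]
            -- bound R (cb ab (x,y)) (fF r)
            set A := Dsup η r * (chat c (prevOf pick r) + 1) with hA
            have hRbound : R (cb ab (x, y)) (fF r) ≤ s * A := by
              rw [R_le_iff]
              intro i hi
              have hρle : ρ i ≤ r := hρ2 i r hi
              rcases lt_or_eq_of_le hρle with hlt | heq
              · -- old rounds
                have hiprev : i ≤ prevOf pick r := hρprev i r hlt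
                have hD := le_Dsup η (le_refl (ρ i))
                have e1 : (ab.1 * x i).natAbs = ab.1.natAbs * (x i).natAbs := Int.natAbs_mul _ _
                have e2 : (ab.2 * y i).natAbs = ab.2.natAbs * (y i).natAbs := Int.natAbs_mul _ _
                have e3 := Int.natAbs_add_le (ab.1 * x i) (ab.2 * y i)
                have e4 := hxabs i
                have e5 := hyabs i
                have f1 : ab.1.natAbs * (x i).natAbs ≤
                    ab.1.natAbs * (Dsup η (ρ i) * (chat c i + 1)) := by
                  rw [e4]
                  exact Nat.mul_le_mul_left _ (Nat.mul_le_mul_right _ (by omega))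
                have f2 : ab.2.natAbs * (y i).natAbs ≤
                    ab.2.natAbs * (Dsup η (ρ i) * (chat c i + 1)) := by
                  rw [e5]
                  exact Nat.mul_le_mul_left _ (Nat.mul_le_mul_right _ (by omega))
                have hb : (cb ab (x, y) i).natAbs ≤
                    s * (Dsup η (ρ i) * (chat c i + 1)) := by
                  rw [cb_apply]
                  calc (ab.1 * x i + ab.2 * y i).natAbs
                      ≤ ab.1.natAbs * (Dsup η (ρ i) * (chat c i + 1)) +
                        ab.2.natAbs * (Dsup η (ρ i) * (chat c i + 1)) := by omega
                    _ = s * (Dsup η (ρ i) * (chat c i + 1)) := (add_mul _ _ _).symm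
                apply le_trans hb
                have h1 : Dsup η (ρ i) ≤ Dsup η r := Dsup_mono η (by omega)
                have h2 : chat c i ≤ chat c (prevOf pick r) := chat_mono c hiprev
                rw [hA]
                exact Nat.mul_le_mul_left _ (Nat.mul_le_mul h1 (by omega))
              · -- current round : frozen
                have hdi : (η (ρ i)).1 = ab := by
                  rw [heq, hηr, ← hdireq]
                have : cb ab (x, y) i = 0 := by
                  rw [cb_apply]
                  show ab.1 * x i + ab.2 * y i = 0
                  rw [hx, hy]
                  simp only
                  rw [hdi]
                  ring
                rw [this]
                simp
            -- conclude
            have hKs : (K+1) * s ≤ r := le_trans (le_max_right _ _) hrM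
            have hthrr := hfFthr r
            have hA1 : thr c η (prevOf pick r) r = (r+2) * (A + 1) + prevOf pick r + 1 := by
              rw [thr, hA]
            calc (K+1) * R (cb ab (x, y)) (fF r) ≤ (K+1) * (s * A) :=
                  Nat.mul_le_mul_left _ hRbound
              _ = ((K+1) * s) * A := by ring
              _ ≤ r * A := Nat.mul_le_mul_right _ hKs
              _ ≤ (r+2) * (A+1) := Nat.mul_le_mul (by omega) (by omega)
              _ ≤ thr c η (prevOf pick r) r := by rw [hA1]; omega
              _ ≤ fF r := hthrr
        · -- old pairs
          have hpF' : p ∈ F' := Finset.mem_erase.mpr ⟨hpxy, hp⟩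
          have hq := hfFquiet r p (by
            rw [hηr]
            simp only
            rw [hΓ, Finset.image_image]
            simpa using hpF')
          rw [hηr] at hq
          simp only at hq
          rwa [hΓ, lookup_image F' dd hpF'] at hq
    · -- F ⊆ P
      have hFP : ↑F ⊆ P := by
        intro p hp
        rcases hF hp with h1 | h1
        · exfalso
          apply hxyF
          rw [← h1]
          exact Finset.mem_coe.mp hp
        · exact h1
      exact hInv F hFP dd K N

lemma cb_10 (p : Seq × Seq) : cb (1, 0) p = p.1 := by
  funext n; rw [cb_apply]; simp
lemma cb_01 (p : Seq × Seq) : cb (0, 1) p = p.2 := by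
  funext n; rw [cb_apply]; simp

lemma R_sum_le (T : Finset (Seq × Seq)) (v : Seq × Seq → Seq) (n : ℕ) :
    R (∑ p ∈ T, v p) n ≤ ∑ p ∈ T, R (v p) n := by
  induction T using Finset.cons_induction with
  | empty => simp [R_zero_fun]
  | cons a T ha ih =>
    rw [Finset.sum_cons, Finset.sum_cons]
    exact le_trans (R_add_le _ _ _) (by omega)

lemma sum_cb_extend (F F' : Finset (Seq × Seq)) (hFF : F ⊆ F') (dd : Seq × Seq → ℤ × ℤ) :
    ∑ p ∈ F', cb (if p ∈ F then dd p else 0) p = ∑ p ∈ F, cb (dd p) p := by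
  rw [← Finset.sum_subset hFF (fun p _ hp => by rw [if_neg hp, cb_zero])]
  exact Finset.sum_congr rfl (fun p hp => by rw [if_pos hp])

/-- common quiet points for finitely many pairs drawn from a `<`-chain of good stages -/
lemma chain_inv {T : Type*} [LinearOrder T] (pairs : T → Seq × Seq) (D : Set T)
    (hgood : ∀ β ∈ D, Inv (insert (pairs β) {p | ∃ γ, ∃ _ : γ < β, p = pairs γ})) :
    ∀ F : Finset (Seq × Seq), (∀ p ∈ F, ∃ β ∈ D, p = pairs β) →
      ∀ dd : Seq × Seq → ℤ × ℤ, ∀ K N : ℕ,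
        ∃ q, N ≤ q ∧ ∀ p ∈ F, (K+1) * R (cb (dd p) p) q ≤ q := by
  intro F hF dd K N
  rcases F.eq_empty_or_nonempty with rfl | hFne
  · exact ⟨N, le_rfl, by simp⟩
  · have hsel : ∀ p : {p // p ∈ F}, ∃ β, β ∈ D ∧ (p : Seq × Seq) = pairs β :=
      fun p => hF p.1 p.2
    choose sel hsel1 hsel2 using hsel
    have hBne : (F.attach.image sel).Nonempty :=
      (Finset.attach_nonempty_iff.mpr hFne).image _
    set β' := (F.attach.image sel).max' hBne with hβ'
    have hβ'D : β' ∈ D := by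
      have h1 := (F.attach.image sel).max'_mem hBne
      rw [← hβ'] at h1
      simp only [Finset.mem_image, Finset.mem_attach, true_and] at h1
      obtain ⟨p, hp⟩ := h1
      rw [← hp]
      exact hsel1 p
    have hsub : ↑F ⊆ insert (pairs β') {p | ∃ γ, ∃ _ : γ < β', p = pairs γ} := by
      intro p hp
      have hpF : p ∈ F := Finset.mem_coe.mp hp
      have h1 : sel ⟨p, hpF⟩ ≤ β' :=
        Finset.le_max' _ _ (Finset.mem_image_of_mem sel (Finset.mem_attach _ _))
      rcases lt_or_eq_of_le h1 with h2 | h2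
      · exact Or.inr ⟨sel ⟨p, hpF⟩, h2, hsel2 ⟨p, hpF⟩⟩
      · exact Or.inl ((hsel2 ⟨p, hpF⟩).trans (congrArg pairs h2))
    exact hgood β' hβ'D F hsub dd K N

/-- transfinite construction of the family of pairs -/
lemma exists_pairs {T : Type*} [LinearOrder T] [WellFoundedLT T]
    (hseg : ∀ α : T, {β | β < α}.Countable) (τ : T → (ℕ → ℕ)) :
    ∃ pairs : T → Seq × Seq,
      ∀ α, (∀ n, τ α n < max (R (pairs α).1 n) (R (pairs α).2 n)) ∧
        Inv (insert (pairs α) {p | ∃ β, ∃ _ : β < α, p = pairs β}) := by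
  classical
  have wf : WellFounded ((· < ·) : T → T → Prop) := (inferInstance : WellFoundedLT T).wf
  have hcnt : ∀ (α : T) (IH : ∀ β, β < α → Seq × Seq),
      {p | ∃ β, ∃ hβ : β < α, p = IH β hβ}.Countable := by
    intro α IH
    have h0 : Set.Countable {β : T | β < α} := hseg α
    haveI := h0.to_subtype
    have he : {p | ∃ β, ∃ hβ : β < α, p = IH β hβ} =
        Set.range (fun b : ↥{β : T | β < α} => IH b.1 b.2) := by
      ext p
      constructor
      · rintro ⟨β, hβ, rfl⟩; exact ⟨⟨β, hβ⟩, rfl⟩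
      · rintro ⟨⟨β, hβ⟩, rfl⟩; exact ⟨β, hβ, rfl⟩
    rw [he]
    exact Set.countable_range _
  set body : ∀ (α : T), (∀ β, β < α → Seq × Seq) → Seq × Seq := fun α IH =>
    if h : Inv {p | ∃ β, ∃ hβ : β < α, p = IH β hβ} then
      (stage (hcnt α IH) h (τ α)).choose
    else (0, 0)
    with hbody
  set pairs : T → Seq × Seq := wf.fix body with hpairs
  have hfix : ∀ α, pairs α = body α (fun β _ => pairs β) := by
    intro α
    rw [hpairs]
    exact wf.fix_eq body α
  refine ⟨pairs, ?_⟩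
  intro α
  induction α using WellFounded.induction with
  | hwf => exact wf
  | _ α IH =>
    have hPinv : Inv {p | ∃ β, ∃ hβ : β < α, p = pairs β} := by
      intro F hF dd K N
      refine chain_inv pairs {β | β < α} (fun β hβ => (IH β hβ).2) F ?_ dd K N
      intro p hp
      obtain ⟨β, hβ, hpe⟩ := hF hp
      exact ⟨β, hβ, hpe⟩
    have heq : pairs α = (stage (hcnt α (fun β _ => pairs β)) hPinv (τ α)).choose := by
      rw [hfix α, hbody]
      simp only
      rw [dif_pos hPinv]
    have hspec := (stage (hcnt α (fun β _ => pairs β)) hPinv (τ α)).choose_spec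
    rw [← heq] at hspec
    exact hspec

end

end MBaux

open MBaux in
/-- Assuming CH, there is a Menger-bounded subgroup of the Baire group `ℤ^ℕ`
whose square is not Menger-bounded. -/
theorem menger_bounded_group_with_non_menger_bounded_square
    (hCH : Cardinal.continuum = Cardinal.aleph 1) :
    ∃ G : AddSubgroup (ℕ → ℤ),
      MengerBounded G ∧ ¬ MengerBounded (G × G) := by
  classical
  set T := (Cardinal.aleph 1).ord.ToType with hT
  letI : IsWellOrder T (· < ·) := isWellOrder_lt
  have hseg : ∀ α : T, {β | β < α}.Countable := by
    intro α
    rw [Cardinal.countable_iff_lt_aleph_one]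
    have h1 : Ordinal.typein ((· < ·) : T → T → Prop) α < (Cardinal.aleph 1).ord :=
      Ordinal.typein_lt_self α
    rw [Cardinal.lt_ord] at h1
    have h2 := Ordinal.card_typein (r := ((· < ·) : T → T → Prop)) α
    have h3 : Cardinal.mk ↑{β : T | β < α} = Cardinal.mk {β : T // β < α} := rfl
    rw [h3, ← h2]
    exact h1
  have hmk1 : Cardinal.mk T = Cardinal.aleph 1 := by
    rw [hT, Cardinal.mk_toType, Cardinal.card_ord]
  have hmk2 : Cardinal.mk (ULift (ℕ → ℕ)) = Cardinal.aleph 1 := by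
    rw [Cardinal.mk_uLift]
    have hc : Cardinal.mk (ℕ → ℕ) = Cardinal.continuum := by
      rw [Cardinal.mk_arrow]
      simp only [Cardinal.mk_nat, Cardinal.lift_id]
      rw [Cardinal.power_self_eq le_rfl, Cardinal.two_power_aleph0]
    rw [hc, Cardinal.lift_continuum, hCH]
  obtain ⟨e⟩ : Nonempty (ULift (ℕ → ℕ) ≃ T) := Cardinal.eq.mp (hmk2.trans hmk1.symm)
  set τ : T → (ℕ → ℕ) := fun t => (e.symm t).down with hτ
  have hτsurj : Function.Surjective τ := by
    intro cfn
    exact ⟨e ⟨cfn⟩, by simp [hτ]⟩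
  obtain ⟨pairs, hpairs⟩ := exists_pairs hseg τ
  set genSet : Set Seq := {w | ∃ α, w = (pairs α).1 ∨ w = (pairs α).2} with hgen
  set G := AddSubgroup.closure genSet with hG
  have hglob : ∀ F : Finset (Seq × Seq), (∀ p ∈ F, ∃ α, p = pairs α) →
      ∀ dd : Seq × Seq → ℤ × ℤ, ∀ K N : ℕ,
        ∃ q, N ≤ q ∧ ∀ p ∈ F, (K+1) * R (cb (dd p) p) q ≤ q := by
    intro F hF dd K N
    refine chain_inv pairs Set.univ (fun β _ => (hpairs β).2) F ?_ dd K N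
    intro p hp
    obtain ⟨α, hα⟩ := hF p hp
    exact ⟨α, trivial, hα⟩
  have hrep : ∀ g ∈ G, ∃ (F : Finset (Seq × Seq)) (dd : Seq × Seq → ℤ × ℤ),
      (∀ p ∈ F, ∃ α, p = pairs α) ∧ g = ∑ p ∈ F, cb (dd p) p := by
    intro g hg
    refine AddSubgroup.closure_induction ?_ ?_ ?_ ?_ hg
    · rintro w ⟨α, hw | hw⟩
      · refine ⟨{pairs α}, fun _ => (1, 0), ?_, ?_⟩
        · intro p hp
          rw [Finset.mem_singleton] at hp
          exact ⟨α, hp⟩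
        · rw [Finset.sum_singleton, cb_10]
          exact hw
      · refine ⟨{pairs α}, fun _ => (0, 1), ?_, ?_⟩
        · intro p hp
          rw [Finset.mem_singleton] at hp
          exact ⟨α, hp⟩
        · rw [Finset.sum_singleton, cb_01]
          exact hw
    · exact ⟨∅, fun _ => 0, by simp, by simp⟩
    · rintro g₁ g₂ _ _ ⟨F₁, dd₁, hs₁, he₁⟩ ⟨F₂, dd₂, hs₂, he₂⟩
      refine ⟨F₁ ∪ F₂,
        fun p => (if p ∈ F₁ then dd₁ p else 0) + (if p ∈ F₂ then dd₂ p else 0), ?_, ?_⟩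
      · intro p hp
        rcases Finset.mem_union.mp hp with h | h
        exacts [hs₁ p h, hs₂ p h]
      · have h1 : ∑ p ∈ F₁ ∪ F₂,
            cb ((if p ∈ F₁ then dd₁ p else 0) + (if p ∈ F₂ then dd₂ p else 0)) p
            = ∑ p ∈ F₁ ∪ F₂, (cb (if p ∈ F₁ then dd₁ p else 0) p
              + cb (if p ∈ F₂ then dd₂ p else 0) p) :=
          Finset.sum_congr rfl (fun p _ => cb_add _ _ _)
        rw [h1, Finset.sum_add_distrib,
          sum_cb_extend F₁ (F₁ ∪ F₂) Finset.subset_union_left dd₁,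
          sum_cb_extend F₂ (F₁ ∪ F₂) Finset.subset_union_right dd₂, he₁, he₂]
    · rintro g₁ _ ⟨F₁, dd₁, hs₁, he₁⟩
      refine ⟨F₁, fun p => -(dd₁ p), hs₁, ?_⟩
      calc -g₁ = -(∑ p ∈ F₁, cb (dd₁ p) p) := by rw [he₁]
        _ = ∑ p ∈ F₁, -(cb (dd₁ p) p) := (Finset.sum_neg_distrib _).symm
        _ = ∑ p ∈ F₁, cb (-(dd₁ p)) p := Finset.sum_congr rfl (fun p _ => (cb_neg _ _).symm)
  have hstar : ∀ g ∈ G, ∀ N : ℕ, ∃ q, N ≤ q ∧ R g q ≤ q := by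
    intro g hg N
    obtain ⟨F, dd, hsub, hrepg⟩ := hrep g hg
    obtain ⟨q, hqN, hq⟩ := hglob F hsub dd F.card N
    refine ⟨q, hqN, ?_⟩
    have h1 : R g q ≤ ∑ p ∈ F, R (cb (dd p) p) q := by
      rw [hrepg]
      exact R_sum_le F _ q
    have h2 : (F.card + 1) * (∑ p ∈ F, R (cb (dd p) p) q) ≤ F.card * q := by
      rw [Finset.mul_sum]
      calc ∑ p ∈ F, (F.card + 1) * R (cb (dd p) p) q ≤ ∑ _p ∈ F, q :=
            Finset.sum_le_sum hq
        _ = F.card * q := by rw [Finset.sum_const, smul_eq_mul]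
    have h3 : (F.card + 1) * (∑ p ∈ F, R (cb (dd p) p) q) ≤ (F.card + 1) * q :=
      le_trans h2 (Nat.mul_le_mul_right q (by omega))
    have h4 : (∑ p ∈ F, R (cb (dd p) p) q) ≤ q :=
      Nat.le_of_mul_le_mul_left h3 (by omega)
    omega
  have hE : ∀ c : ℕ → ℕ, ∃ x ∈ G, ∃ y ∈ G, ∀ n, c n < max (R x n) (R y n) := by
    intro c
    obtain ⟨α, hα⟩ := hτsurj c
    refine ⟨(pairs α).1, AddSubgroup.subset_closure ⟨α, Or.inl rfl⟩,
      (pairs α).2, AddSubgroup.subset_closure ⟨α, Or.inr rfl⟩, ?_⟩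
    intro n
    have := (hpairs α).1 n
    rwa [hα] at this
  exact ⟨G, menger_of_dips G hstar, not_menger_sq G hE⟩
end

section
/- For every infinite cardinal κ with κ ≤ 2^ℵ₀, there exists an infinite almost disjoint family F of infinite subsets of ℕ such that a⁺(F) = κ, where a⁺(F) is the least possible cardinality of F⁺ \ F over all maximal almost disjoint families F⁺ extending F. -/
open Set Cardinal

/-- An almost disjoint family: a family of infinite subsets of `ℕ` any two distinct
members of which have finite intersection. -/
def AlmostDisjointFamily (F : Set (Set ℕ)) : Prop :=
  (∀ A ∈ F, A.Infinite) ∧ ∀ A ∈ F, ∀ B ∈ F, A ≠ B → (A ∩ B).Finite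

/-- A maximal almost disjoint (mad) family: an infinite almost disjoint family not
properly contained in any larger almost disjoint family. -/
def MadFamily (F : Set (Set ℕ)) : Prop :=
  AlmostDisjointFamily F ∧ F.Infinite ∧
    ∀ F' : Set (Set ℕ), AlmostDisjointFamily F' → F ⊆ F' → F' = F

/-- `a⁺(F)`: the least possible cardinality of `F⁺ \ F` over all mad families `F⁺`
extending `F`. -/
noncomputable def aPlus (F : Set (Set ℕ)) : Cardinal :=
  sInf { c : Cardinal | ∃ F' : Set (Set ℕ), MadFamily F' ∧ F ⊆ F' ∧ #(↥(F' \ F)) = c }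

namespace APlusAux

abbrev L := List Bool

noncomputable instance : Denumerable L := Denumerable.ofEncodableOfInfinite _

noncomputable def D : ℕ ≃ L := (Denumerable.eqv L).symm

/-- Initial segment of length `n` of the infinite binary sequence `x`. -/
def seg (x : ℕ → Bool) (n : ℕ) : L := (List.range n).map x

/-- The branch of `x`: all initial segments. -/
def branch (x : ℕ → Bool) : Set L := Set.range (seg x)

/-- Antichain in the prefix order. -/
def IsAC (A : Set L) : Prop := ∀ a ∈ A, ∀ b ∈ A, a <+: b → a = b

@[simp] lemma seg_length (x : ℕ → Bool) (n : ℕ) : (seg x n).length = n := by simp [seg]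

lemma seg_getElem (x : ℕ → Bool) {n i : ℕ} (h : i < (seg x n).length) :
    (seg x n)[i] = x i := by simp [seg]

lemma seg_injective (x : ℕ → Bool) : Function.Injective (seg x) := by
  intro m n h
  simpa using congrArg List.length h

lemma take_seg (x : ℕ → Bool) (n k : ℕ) : List.take k (seg x n) = seg x (min k n) := by
  simp [seg, ← List.map_take, List.take_range]

lemma seg_prefix_seg (x : ℕ → Bool) {n m : ℕ} (h : n ≤ m) : seg x n <+: seg x m := by
  rw [List.prefix_iff_eq_take, take_seg, seg_length, Nat.min_eq_left h]

lemma prefix_seg {x : ℕ → Bool} {l : L} {n : ℕ} (h : l <+: seg x n) :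
    l = seg x l.length ∧ l.length ≤ n := by
  have hlen : l.length ≤ n := by simpa using h.length_le
  rw [List.prefix_iff_eq_take, take_seg, Nat.min_eq_left hlen] at h
  exact ⟨h, hlen⟩

lemma mem_branch {x : ℕ → Bool} {l : L} : l ∈ branch x ↔ ∃ n, seg x n = l := Iff.rfl

lemma branch_infinite (x : ℕ → Bool) : (branch x).Infinite :=
  Set.infinite_range_of_injective (seg_injective x)

lemma seg_apply_eq {x y : ℕ → Bool} {n i : ℕ} (h : seg x n = seg y n) (hi : i < n) :
    x i = y i := by
  have h1 := List.getElem_of_eq h (show i < (seg x n).length by simpa using hi)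
  rwa [seg_getElem, seg_getElem] at h1

lemma branch_inter_finite {x y : ℕ → Bool} (h : x ≠ y) :
    (branch x ∩ branch y).Finite := by
  obtain ⟨j, hj⟩ := Function.ne_iff.mp h
  apply Set.Finite.subset ((Set.finite_Iic j).image (seg x))
  rintro l ⟨⟨n, rfl⟩, ⟨m, hm⟩⟩
  have hnm : m = n := by simpa using congrArg List.length hm
  subst hnm
  refine ⟨m, ?_, rfl⟩
  simp only [Set.mem_Iic]
  by_contra hc
  exact hj (seg_apply_eq hm.symm (by omega))

lemma branch_injective : Function.Injective branch := by
  intro x y h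
  by_contra hne
  have := branch_inter_finite hne
  rw [h, Set.inter_self] at this
  exact (branch_infinite y) this

lemma IsAC.inter_branch_finite {A : Set L} (hA : IsAC A) (x : ℕ → Bool) :
    (A ∩ branch x).Finite := by
  apply Set.Subsingleton.finite
  rintro a ⟨haA, n, rfl⟩ b ⟨hbA, m, rfl⟩
  rcases le_total n m with h | h
  · exact hA _ haA _ hbA (seg_prefix_seg x h)
  · exact (hA _ hbA _ haA (seg_prefix_seg x h)).symm

lemma branch_not_AC (x : ℕ → Bool) : ¬ IsAC (branch x) := by
  intro h
  have := h (seg x 0) ⟨0, rfl⟩ (seg x 1) ⟨1, rfl⟩ (seg_prefix_seg x (by omega))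
  simpa using congrArg List.length this

lemma finite_prefixes (l : L) : {p : L | p <+: l}.Finite := by
  apply Set.Finite.subset ((Set.finite_Iic l.length).image (fun k => l.take k))
  intro p hp
  exact ⟨p.length, by simpa using hp.length_le, (List.prefix_iff_eq_take.mp hp).symm⟩

lemma comp_getElem {a b : L} (h : a <+: b ∨ b <+: a) {i : ℕ} (ha : i < a.length)
    (hb : i < b.length) : a[i] = b[i] := by
  rcases h with h | h
  · exact h.getElem ha
  · exact (h.getElem hb).symm

lemma chain_subset_branch {C : Set L} (hC : ∀ a ∈ C, ∀ b ∈ C, a <+: b ∨ b <+: a)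
    (hinf : C.Infinite) : ∃ x, C ⊆ branch x := by
  have hinjOn : Set.InjOn List.length C := by
    intro a ha b hb h
    rcases hC a ha b hb with h' | h'
    · exact h'.eq_of_length h
    · exact (h'.eq_of_length h.symm).symm
  have himg : (List.length '' C).Infinite := (Set.infinite_image_iff hinjOn).mpr hinf
  have hlong : ∀ i : ℕ, ∃ l, l ∈ C ∧ i < l.length := by
    intro i
    obtain ⟨n, hn, hni⟩ := himg.exists_gt i
    obtain ⟨l, hl, rfl⟩ := hn
    exact ⟨l, hl, hni⟩
  choose f hf hlen using hlong
  refine ⟨fun i => (f i)[i]'(hlen i), fun l hl => ⟨l.length, ?_⟩⟩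
  apply List.ext_getElem (by simp)
  intro i h1 h2
  rw [seg_getElem]
  exact comp_getElem (hC (f i) (hf i) l hl) (hlen i) h2


section Core

lemma exists_mem_subset_of_chain {α : Type*} {c : Set (Set α)} (hchain : IsChain (· ⊆ ·) c)
    (hne : c.Nonempty) {U : Set α} (hU : U.Finite) :
    U ⊆ ⋃₀ c → ∃ M ∈ c, U ⊆ M := by
  refine Set.Finite.induction_on (motive := fun U _ => U ⊆ ⋃₀ c → ∃ M ∈ c, U ⊆ M) U hU
    (fun _ => ⟨hne.choose, hne.choose_spec, by simp⟩) ?_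
  · intro a s ha hs ih hsub
    obtain ⟨M, hM, hsM⟩ := ih (fun y hy => hsub (Set.mem_insert_of_mem _ hy))
    obtain ⟨N, hN, haN⟩ := hsub (Set.mem_insert a s)
    rcases eq_or_ne M N with rfl | hMN
    · exact ⟨M, hM, Set.insert_subset haN hsM⟩
    rcases hchain hM hN hMN with h | h
    · exact ⟨N, hN, Set.insert_subset haN (hsM.trans h)⟩
    · exact ⟨M, hM, Set.insert_subset (h haN) hsM⟩

lemma exists_infinite_AC {X : Set L} (hX : X.Infinite)
    (hext : ∀ m ∈ X, {m' | m' ∈ X ∧ m <+: m' ∧ m ≠ m'}.Finite) :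
    ∃ A, A ⊆ X ∧ A.Infinite ∧ IsAC A := by
  have hzorn : ∀ c ⊆ {A : Set L | A ⊆ X ∧ IsAC A}, IsChain (· ⊆ ·) c →
      ∃ ub ∈ {A : Set L | A ⊆ X ∧ IsAC A}, ∀ s ∈ c, s ⊆ ub := by
    intro c hcS hchain
    refine ⟨⋃₀ c, ⟨Set.sUnion_subset fun s hs => (hcS hs).1, ?_⟩,
      fun s hs => Set.subset_sUnion_of_mem hs⟩
    rintro a ⟨s, hs, has⟩ b ⟨t, ht, hbt⟩ hab
    rcases eq_or_ne s t with rfl | hst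
    · exact (hcS hs).2 a has b hbt hab
    rcases hchain hs ht hst with h | h
    · exact (hcS ht).2 a (h has) b hbt hab
    · exact (hcS hs).2 a has b (h hbt) hab
  obtain ⟨A, hA⟩ := zorn_subset _ hzorn
  obtain ⟨⟨hAX, hAC⟩, hmax⟩ := hA
  by_cases hfin : A.Finite
  · exfalso
    have hbad : (A ∪ ⋃ m ∈ A, ({p | p <+: m} ∪ {m' | m' ∈ X ∧ m <+: m' ∧ m ≠ m'})).Finite :=
      hfin.union (hfin.biUnion fun m hm => (finite_prefixes m).union (hext m (hAX hm)))
    obtain ⟨m₀, hm₀X, hm₀bad⟩ := (hX.diff hbad).nonempty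
    have hm₀A : m₀ ∉ A := fun h => hm₀bad (Set.mem_union_left _ h)
    have hnew : insert m₀ A ∈ {A : Set L | A ⊆ X ∧ IsAC A} := by
      refine ⟨Set.insert_subset hm₀X hAX, ?_⟩
      intro a ha b hb hab
      rcases Set.mem_insert_iff.mp ha with ha' | haA <;>
        rcases Set.mem_insert_iff.mp hb with h' | hbA
      · exact ha'.trans h'.symm
      · exfalso
        apply hm₀bad
        have hmem : m₀ ∈ ({p | p <+: b} ∪ {m' | m' ∈ X ∧ b <+: m' ∧ b ≠ m'}) :=
          Or.inl (ha' ▸ hab)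
        exact Set.mem_union_right _ (Set.mem_biUnion hbA hmem)
      · exfalso
        apply hm₀bad
        have hne' : a ≠ m₀ := fun hh => hm₀A (hh ▸ haA)
        have hmem : m₀ ∈ ({p | p <+: a} ∪ {m' | m' ∈ X ∧ a <+: m' ∧ a ≠ m'}) :=
          Or.inr ⟨hm₀X, h' ▸ hab, hne'⟩
        exact Set.mem_union_right _ (Set.mem_biUnion haA hmem)
      · exact hAC a haA b hbA hab
    exact hm₀A (hmax hnew (Set.subset_insert _ _) (Set.mem_insert _ _))
  · exact ⟨A, hAX, hfin, hAC⟩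

lemma exists_branch_of_no_AC {E : Set L} (hE : E.Infinite)
    (hno : ∀ A, A ⊆ E → A.Infinite → ¬ IsAC A) :
    ∃ x, (E ∩ branch x).Infinite := by
  classical
  have key : ∀ Y, Y ⊆ E → Y.Infinite →
      ¬ (∀ m ∈ Y, {m' | m' ∈ Y ∧ m <+: m' ∧ m ≠ m'}.Finite) := by
    intro Y hYE hYinf hfin
    obtain ⟨A, hAY, hAinf, hAC⟩ := exists_infinite_AC hYinf hfin
    exact hno A (hAY.trans hYE) hAinf hAC
  set E' := {m | m ∈ E ∧ {m' | m' ∈ E ∧ m <+: m' ∧ m ≠ m'}.Infinite} with hE'def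
  have hE'E : E' ⊆ E := fun m hm => hm.1
  have hne : E'.Nonempty := by
    by_contra h
    rw [Set.not_nonempty_iff_eq_empty] at h
    apply key E (fun x hx => hx) hE
    intro m hm
    rw [← Set.not_infinite]
    intro hinf
    have : m ∈ E' := ⟨hm, hinf⟩
    simp [h] at this
  have hstep : ∀ m ∈ E', ∃ m', m' ∈ E' ∧ m <+: m' ∧ m ≠ m' := by
    intro m hm
    by_contra h
    push_neg at h
    apply key {m' | m' ∈ E ∧ m <+: m' ∧ m ≠ m'} (fun y hy => hy.1) hm.2
    intro y hy
    have hyE' : y ∉ E' := fun hyE' => hy.2.2 (h y hyE' hy.2.1)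
    have hyfin : {m' | m' ∈ E ∧ y <+: m' ∧ y ≠ m'}.Finite := by
      rw [← Set.not_infinite]
      exact fun hinf => hyE' ⟨hy.1, hinf⟩
    apply hyfin.subset
    rintro z ⟨⟨hzE, _, _⟩, hyz, hyz'⟩
    exact ⟨hzE, hyz, hyz'⟩
  have hzorn : ∀ c ⊆ {C : Set L | C ⊆ E' ∧ ∀ a ∈ C, ∀ b ∈ C, a <+: b ∨ b <+: a},
      IsChain (· ⊆ ·) c →
      ∃ ub ∈ {C : Set L | C ⊆ E' ∧ ∀ a ∈ C, ∀ b ∈ C, a <+: b ∨ b <+: a},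
        ∀ s ∈ c, s ⊆ ub := by
    intro c hcS hchain
    refine ⟨⋃₀ c, ⟨Set.sUnion_subset fun s hs => (hcS hs).1, ?_⟩,
      fun s hs => Set.subset_sUnion_of_mem hs⟩
    rintro a ⟨s, hs, has⟩ b ⟨t, ht, hbt⟩
    rcases eq_or_ne s t with rfl | hst
    · exact (hcS hs).2 a has b hbt
    rcases hchain hs ht hst with h | h
    · exact (hcS ht).2 a (h has) b hbt
    · exact (hcS hs).2 a has b (h hbt)
  obtain ⟨C, hC⟩ := zorn_subset _ hzorn
  obtain ⟨⟨hCE', hCcomp⟩, hCmax⟩ := hC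
  by_cases hCfin : C.Finite
  · exfalso
    rcases Set.eq_empty_or_nonempty C with rfl | hCne
    · obtain ⟨m, hm⟩ := hne
      have h1 : ({m} : Set L) ∈ {C : Set L | C ⊆ E' ∧ ∀ a ∈ C, ∀ b ∈ C, a <+: b ∨ b <+: a} := by
        refine ⟨by simpa using hm, ?_⟩
        intro a ha b hb
        rw [Set.mem_singleton_iff] at ha hb
        subst ha; subst hb
        exact Or.inl (List.prefix_refl _)
      have := hCmax h1 (Set.empty_subset _) (rfl : m ∈ ({m} : Set L))
      simp at this
    · obtain ⟨t, htC, htmax⟩ := Set.Finite.exists_maximalFor List.length C hCfin hCne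
      have hallpre : ∀ a ∈ C, a <+: t := by
        intro a ha
        rcases hCcomp a ha t htC with h | h
        · exact h
        · rw [h.eq_of_length (le_antisymm h.length_le (htmax ha h.length_le))]
      obtain ⟨t', ht'E', htt', htne⟩ := hstep t (hCE' htC)
      have hnew : insert t' C ∈
          {C : Set L | C ⊆ E' ∧ ∀ a ∈ C, ∀ b ∈ C, a <+: b ∨ b <+: a} := by
        refine ⟨Set.insert_subset ht'E' hCE', ?_⟩
        intro a ha b hb
        rcases Set.mem_insert_iff.mp ha with rfl | haC <;>
          rcases Set.mem_insert_iff.mp hb with rfl | hbC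
        · exact Or.inl (List.prefix_refl _)
        · exact Or.inr ((hallpre b hbC).trans htt')
        · exact Or.inl ((hallpre a haC).trans htt')
        · exact hCcomp a haC b hbC
      have ht'C : t' ∈ C := hCmax hnew (Set.subset_insert _ _) (Set.mem_insert _ _)
      exact htne ((htt'.eq_of_length (le_antisymm htt'.length_le
        (hallpre t' ht'C).length_le)))
  · obtain ⟨x, hCx⟩ := chain_subset_branch hCcomp hCfin
    exact ⟨x, Set.Infinite.mono (Set.subset_inter (hCE'.trans hE'E) hCx) hCfin⟩

def cone (a : L) : Set (ℕ → Bool) := {z | seg z a.length = a}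

lemma finite_branchSet_of_no_AC {E : Set L}
    (hno : ∀ A, A ⊆ E → A.Infinite → ¬ IsAC A) :
    {x | (E ∩ branch x).Infinite}.Finite := by
  classical
  set T := {x | (E ∩ branch x).Infinite} with hTdef
  rw [← Set.not_infinite]
  intro hTinf
  have hlong : ∀ x ∈ T, ∀ k : ℕ, ∃ n, k ≤ n ∧ seg x n ∈ E := by
    intro x hx k
    have hN : {n | seg x n ∈ E}.Infinite := by
      by_contra hNf
      rw [Set.not_infinite] at hNf
      have hsub : E ∩ branch x ⊆ seg x '' {n | seg x n ∈ E} := by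
        rintro l ⟨hlE, n, rfl⟩
        exact ⟨n, hlE, rfl⟩
      exact (hx : (E ∩ branch x).Infinite) ((hNf.image (seg x)).subset hsub)
    obtain ⟨n, hn, hkn⟩ := hN.exists_gt k
    exact ⟨n, hkn.le, hn⟩
  have hzorn : ∀ c ⊆ {A : Set L | A ⊆ E ∧ IsAC A ∧
        (A.Finite → (T \ ⋃ a ∈ A, cone a).Infinite)},
      IsChain (· ⊆ ·) c →
      ∃ ub ∈ {A : Set L | A ⊆ E ∧ IsAC A ∧
        (A.Finite → (T \ ⋃ a ∈ A, cone a).Infinite)}, ∀ s ∈ c, s ⊆ ub := by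
    intro c hcS hchain
    rcases Set.eq_empty_or_nonempty c with rfl | hcne
    · refine ⟨∅, ⟨Set.empty_subset _, ?_, fun _ => by simpa using hTinf⟩, by simp⟩
      intro a ha
      simp at ha
    refine ⟨⋃₀ c, ⟨Set.sUnion_subset fun s hs => (hcS hs).1, ?_, ?_⟩,
      fun s hs => Set.subset_sUnion_of_mem hs⟩
    · rintro a ⟨s, hs, has⟩ b ⟨t, ht, hbt⟩ hab
      rcases eq_or_ne s t with rfl | hst
      · exact (hcS hs).2.1 a has b hbt hab
      rcases hchain hs ht hst with h | h
      · exact (hcS ht).2.1 a (h has) b hbt hab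
      · exact (hcS hs).2.1 a has b (h hbt) hab
    · intro hfin
      obtain ⟨M, hMc, hM⟩ := exists_mem_subset_of_chain hchain hcne hfin (subset_refl _)
      have hEq : ⋃₀ c = M := le_antisymm hM (Set.subset_sUnion_of_mem hMc)
      rw [hEq]
      exact (hcS hMc).2.2 (hEq ▸ hfin)
  obtain ⟨A, hA⟩ := zorn_subset _ hzorn
  obtain ⟨⟨hAE, hAC, hAcone⟩, hAmax⟩ := hA
  by_cases hAfin : A.Finite
  swap
  · exact hno A hAE hAfin hAC
  have hT' : (T \ ⋃ a ∈ A, cone a).Infinite := hAcone hAfin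
  set T' := T \ ⋃ a ∈ A, cone a with hT'def
  have hxj : ∃ x, x ∈ T' ∧ ∃ j, {z | z ∈ T' ∧ z j ≠ x j}.Infinite := by
    by_contra h
    push_neg at h
    obtain ⟨x, hx, y, hy, hxy⟩ := hT'.nontrivial
    obtain ⟨j, hj⟩ := Function.ne_iff.mp hxy
    have h1 : {z | z ∈ T' ∧ z j ≠ x j}.Finite := by
      exact h x hx j
    have h2 : {z | z ∈ T' ∧ z j ≠ y j}.Finite := by
      exact h y hy j
    apply hT'
    apply (h1.union h2).subset
    intro z hz
    rcases eq_or_ne (z j) (x j) with he | hne'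
    · exact Or.inr ⟨hz, he ▸ hj⟩
    · exact Or.inl ⟨hz, hne'⟩
  obtain ⟨x, hxT', j, hj⟩ := hxj
  obtain ⟨B₀, hB₀⟩ : ∃ B₀, ∀ a ∈ A, a.length ≤ B₀ := by
    obtain ⟨B₀, hB₀⟩ := (hAfin.image List.length).bddAbove
    exact ⟨B₀, fun a ha => hB₀ ⟨a, ha, rfl⟩⟩
  obtain ⟨k, hk, hkE⟩ := hlong x hxT'.1 (max (j + 1) B₀ + 1)
  have hjk : j < k := lt_of_lt_of_le (by omega : j < max (j+1) B₀ + 1) hk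
  have hBk : B₀ < k := lt_of_lt_of_le (by omega : B₀ < max (j+1) B₀ + 1) hk
  have hxcone : x ∈ cone (seg x k) := by simp [cone]
  have hmA : ∀ a ∈ A, ¬ a <+: seg x k := by
    intro a ha hpre
    obtain ⟨he, _⟩ := prefix_seg hpre
    have : x ∈ cone a := by
      simp only [cone, Set.mem_setOf_eq]
      exact he.symm
    exact hxT'.2 (Set.mem_biUnion ha this)
  have hmA' : ∀ a ∈ A, ¬ seg x k <+: a := by
    intro a ha hpre
    have h1 := hpre.length_le
    rw [seg_length] at h1
    exact absurd (hB₀ a ha) (by omega)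
  have hmnotA : (seg x k) ∉ A := fun hmem => hxT'.2 (Set.mem_biUnion hmem hxcone)
  have hnew : insert (seg x k) A ∈ {A : Set L | A ⊆ E ∧ IsAC A ∧
      (A.Finite → (T \ ⋃ a ∈ A, cone a).Infinite)} := by
    refine ⟨Set.insert_subset hkE hAE, ?_, ?_⟩
    · intro a ha b hb hab
      rcases Set.mem_insert_iff.mp ha with rfl | haA <;>
        rcases Set.mem_insert_iff.mp hb with h' | hbA
      · exact h' ▸ rfl
      · exact absurd hab (hmA' b hbA)
      · subst h'
        exact absurd hab (hmA a haA)
      · exact hAC a haA b hbA hab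
    · intro _
      apply Set.Infinite.mono ?_ hj
      rintro z ⟨hzT', hzj⟩
      refine ⟨hzT'.1, ?_⟩
      intro hzmem
      rw [Set.mem_iUnion₂] at hzmem
      obtain ⟨a, haA, hza⟩ := hzmem
      rcases Set.mem_insert_iff.mp haA with rfl | haA'
      · -- z ∈ cone (seg x k)
        have hzx : seg z k = seg x k := by
          have := hza
          simp only [cone, Set.mem_setOf_eq, seg_length] at this
          exact this
        exact hzj (seg_apply_eq hzx hjk)
      · exact hzT'.2 (Set.mem_biUnion haA' hza)
  exact hmnotA (hAmax hnew (Set.subset_insert _ _) (Set.mem_insert _ _))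

end Core


section Family

/-- Generic almost disjoint family (same shape as the ℕ-specific definition). -/
def ADFam (α : Type) (F : Set (Set α)) : Prop :=
  (∀ A ∈ F, A.Infinite) ∧ ∀ A ∈ F, ∀ B ∈ F, A ≠ B → (A ∩ B).Finite

/-- Generic mad family. -/
def MadFam (α : Type) (F : Set (Set α)) : Prop :=
  ADFam α F ∧ F.Infinite ∧ ∀ F' : Set (Set α), ADFam α F' → F ⊆ F' → F' = F

lemma exists_max_ACfam : ∃ 𝒜 : Set (Set L),
    (∀ A ∈ 𝒜, A.Infinite ∧ IsAC A) ∧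
    (∀ A ∈ 𝒜, ∀ B ∈ 𝒜, A ≠ B → (A ∩ B).Finite) ∧
    (∀ A' : Set L, A'.Infinite → IsAC A' → (∀ B ∈ 𝒜, (A' ∩ B).Finite) → A' ∈ 𝒜) := by
  have hzorn : ∀ c ⊆ {𝒜 : Set (Set L) | (∀ A ∈ 𝒜, A.Infinite ∧ IsAC A) ∧
      (∀ A ∈ 𝒜, ∀ B ∈ 𝒜, A ≠ B → (A ∩ B).Finite)},
      IsChain (· ⊆ ·) c →
      ∃ ub ∈ {𝒜 : Set (Set L) | (∀ A ∈ 𝒜, A.Infinite ∧ IsAC A) ∧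
        (∀ A ∈ 𝒜, ∀ B ∈ 𝒜, A ≠ B → (A ∩ B).Finite)}, ∀ s ∈ c, s ⊆ ub := by
    intro c hcS hchain
    refine ⟨⋃₀ c, ⟨fun A hA => ?_, ?_⟩, fun s hs => Set.subset_sUnion_of_mem hs⟩
    · obtain ⟨s, hs, hAs⟩ := hA
      exact (hcS hs).1 A hAs
    · rintro A ⟨s, hs, hAs⟩ B ⟨t, ht, hBt⟩ hAB
      rcases eq_or_ne s t with rfl | hst
      · exact (hcS hs).2 A hAs B hBt hAB
      rcases hchain hs ht hst with h | h
      · exact (hcS ht).2 A (h hAs) B hBt hAB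
      · exact (hcS hs).2 A hAs B (h hBt) hAB
  obtain ⟨𝒜, ⟨h1, h2⟩, hmax⟩ := zorn_subset _ hzorn
  refine ⟨𝒜, h1, h2, ?_⟩
  intro A' hinf hac hdis
  have hnew : insert A' 𝒜 ∈ {𝒜 : Set (Set L) | (∀ A ∈ 𝒜, A.Infinite ∧ IsAC A) ∧
      (∀ A ∈ 𝒜, ∀ B ∈ 𝒜, A ≠ B → (A ∩ B).Finite)} := by
    constructor
    · intro A hA
      rcases Set.mem_insert_iff.mp hA with rfl | hA'
      · exact ⟨hinf, hac⟩
      · exact h1 A hA'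
    · intro A hA B hB hAB
      rcases Set.mem_insert_iff.mp hA with rfl | hA' <;>
        rcases Set.mem_insert_iff.mp hB with h' | hB'
      · exact absurd h'.symm hAB
      · exact hdis B hB'
      · rw [Set.inter_comm, h']
        exact hdis A hA'
      · exact h2 A hA' B hB' hAB
  exact hmax hnew (Set.subset_insert _ _) (Set.mem_insert _ _)

/-- If `E` is almost disjoint from every member of a maximal AC family, then no infinite
subset of `E` is an antichain. -/
lemma noAC_of_maxACfam {𝒜 : Set (Set L)}
    (h1 : ∀ A ∈ 𝒜, A.Infinite ∧ IsAC A)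
    (h3 : ∀ A' : Set L, A'.Infinite → IsAC A' → (∀ B ∈ 𝒜, (A' ∩ B).Finite) → A' ∈ 𝒜)
    {E : Set L} (hdis : ∀ B ∈ 𝒜, (E ∩ B).Finite) :
    ∀ A, A ⊆ E → A.Infinite → ¬ IsAC A := by
  intro A hAE hAinf hAAC
  have hA𝒜 : A ∈ 𝒜 := by
    apply h3 A hAinf hAAC
    intro B hB
    exact (hdis B hB).subset (Set.inter_subset_inter_left B hAE)
  have : (E ∩ A).Finite := hdis A hA𝒜
  rw [Set.inter_eq_right.mpr hAE] at this
  exact hAinf this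

theorem main_L (κ : Cardinal) (hκ : Cardinal.aleph0 ≤ κ) (hκc : κ ≤ Cardinal.continuum) :
    ∃ F : Set (Set L), ADFam L F ∧ F.Infinite ∧
      (∃ G : Set (Set L), MadFam L G ∧ F ⊆ G ∧ #(↥(G \ F)) = κ) ∧
      (∀ F' : Set (Set L), MadFam L F' → F ⊆ F' → κ ≤ #(↥(F' \ F))) := by
  classical
  obtain ⟨𝒜, h1, h2, h3⟩ := exists_max_ACfam
  -- pick S of size κ with infinite complement
  have hcont : #(ℕ → Bool) = Cardinal.continuum := by
    rw [Cardinal.mk_arrow]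
    simp only [Cardinal.mk_bool, Cardinal.mk_nat, Cardinal.lift_id, Cardinal.lift_ofNat]
    exact Cardinal.two_power_aleph0
  have hsum : #((ℕ → Bool) ⊕ (ℕ → Bool)) = #(ℕ → Bool) := by
    simp only [Cardinal.mk_sum, Cardinal.lift_id]
    rw [hcont]
    exact Cardinal.add_eq_self Cardinal.aleph0_le_continuum
  obtain ⟨ι⟩ := Cardinal.eq.mp hsum
  obtain ⟨S₀, hS₀⟩ := Cardinal.le_mk_iff_exists_set.mp (hκc.trans_eq hcont.symm)
  set S : Set (ℕ → Bool) := ι '' (Sum.inl '' S₀) with hSdef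
  have hScard : #(↥S) = κ := by
    rw [hSdef, Cardinal.mk_image_eq ι.injective, Cardinal.mk_image_eq Sum.inl_injective]
    exact hS₀
  have hScinf : Sᶜ.Infinite := by
    apply Set.infinite_of_injective_forall_mem
      (f := fun y : ℕ → Bool => ι (Sum.inr y))
    · intro a b hab
      simpa using ι.injective hab
    · intro y
      simp only [Set.mem_compl_iff, hSdef]
      rintro ⟨z, ⟨w, hw, rfl⟩, hzy⟩
      exact Sum.inl_ne_inr (ι.injective hzy)
  -- the families
  have hbranch_notin_𝒜 : ∀ x, branch x ∉ 𝒜 := fun x hx => branch_not_AC x (h1 _ hx).2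
  set F : Set (Set L) := 𝒜 ∪ branch '' Sᶜ with hFdef
  set G : Set (Set L) := 𝒜 ∪ branch '' Set.univ with hGdef
  have hFG : F ⊆ G := Set.union_subset_union_right _ (Set.image_mono (Set.subset_univ _))
  have hGad : ADFam L G := by
    constructor
    · intro A hA
      rcases hA with hA | ⟨x, _, rfl⟩
      · exact (h1 A hA).1
      · exact branch_infinite x
    · intro A hA B hB hAB
      rcases hA with hA | ⟨x, _, rfl⟩ <;> rcases hB with hB | ⟨y, _, rfl⟩
      · exact h2 A hA B hB hAB
      · exact (h1 A hA).2.inter_branch_finite y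
      · rw [Set.inter_comm]
        exact (h1 B hB).2.inter_branch_finite x
      · exact branch_inter_finite (fun h => hAB (h ▸ rfl))
  have hFad : ADFam L F := by
    refine ⟨fun A hA => hGad.1 A (hFG hA), fun A hA B hB hAB => hGad.2 A (hFG hA) B (hFG hB) hAB⟩
  have hFinf : F.Infinite := by
    apply Set.Infinite.mono (Set.subset_union_right)
    exact ((Set.infinite_image_iff branch_injective.injOn).mpr hScinf)
  -- no infinite antichain inside sets a.d. from F (in fact from 𝒜)
  have hnoACof : ∀ E : Set L, (∀ B ∈ 𝒜, (E ∩ B).Finite) →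
      ∀ A, A ⊆ E → A.Infinite → ¬ IsAC A := fun E hdis => noAC_of_maxACfam h1 h3 hdis
  -- G is mad
  have hGmad : MadFam L G := by
    refine ⟨hGad, hFinf.mono hFG, ?_⟩
    intro F'' hF'' hsub
    refine Set.Subset.antisymm ?_ hsub
    intro E hE
    by_contra hEG
    have hEinf : E.Infinite := hF''.1 E hE
    have hEdis : ∀ M ∈ G, (E ∩ M).Finite := fun M hM =>
      hF''.2 E hE M (hsub hM) (fun h => hEG (h ▸ hM))
    have hnoAC := hnoACof E (fun B hB => hEdis B (Or.inl hB))
    obtain ⟨x, hx⟩ := exists_branch_of_no_AC hEinf hnoAC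
    exact hx (hEdis (branch x) (Or.inr ⟨x, Set.mem_univ x, rfl⟩))
  have hGdiff : G \ F = branch '' S := by
    ext E
    constructor
    · rintro ⟨hEG, hEF⟩
      rcases hEG with hE𝒜 | ⟨x, _, rfl⟩
      · exact absurd (Or.inl hE𝒜) hEF
      · refine ⟨x, ?_, rfl⟩
        by_contra hxS
        exact hEF (Or.inr ⟨x, hxS, rfl⟩)
    · rintro ⟨x, hxS, rfl⟩
      refine ⟨Or.inr ⟨x, Set.mem_univ x, rfl⟩, ?_⟩
      rintro (h𝒜 | ⟨y, hy, hxy⟩)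
      · exact hbranch_notin_𝒜 x h𝒜
      · obtain rfl := branch_injective hxy
        exact hy hxS
  refine ⟨F, hFad, hFinf, ⟨G, hGmad, hFG, ?_⟩, ?_⟩
  · rw [hGdiff, Cardinal.mk_image_eq branch_injective, hScard]
  · intro F' hF' hsubF'
    have hEx : ∀ x : ↥S, ∃ E, E ∈ F' ∧ (E ∩ branch (x : ℕ → Bool)).Infinite ∧ E ∉ F := by
      rintro ⟨x, hxS⟩
      have hnotF : ∀ B' : Set L, (B' ∩ branch x).Infinite → B' ∉ F := by
        intro B' hBinf hBF
        rcases hBF with h𝒜 | ⟨y, hy, rfl⟩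
        · exact hBinf (((h1 B' h𝒜).2).inter_branch_finite x)
        · rcases eq_or_ne y x with rfl | hyx
          · exact hy hxS
          · exact hBinf (branch_inter_finite hyx)
      by_cases hbx : branch x ∈ F'
      · have hself : ((branch x : Set L) ∩ branch x).Infinite := by
          rw [Set.inter_self]; exact branch_infinite x
        exact ⟨branch x, hbx, hself, hnotF _ hself⟩
      · have hins : ¬ ADFam L (insert (branch x) F') := by
          intro had
          exact hbx ((hF'.2.2 _ had (Set.subset_insert _ _)) ▸ Set.mem_insert _ _)
        have hP : ∀ A ∈ insert (branch x) F', A.Infinite := by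
          intro A hA
          rcases Set.mem_insert_iff.mp hA with rfl | hA'
          · exact branch_infinite x
          · exact hF'.1.1 A hA'
        have hQ : ¬ (∀ A ∈ insert (branch x) F', ∀ B ∈ insert (branch x) F',
            A ≠ B → (A ∩ B).Finite) := fun hq => hins ⟨hP, hq⟩
        push_neg at hQ
        obtain ⟨A, hA, B, hB, hAB, hABinf⟩ := hQ
        rcases Set.mem_insert_iff.mp hA with rfl | hAF' <;>
          rcases Set.mem_insert_iff.mp hB with hB' | hBF'
        · exact absurd hB'.symm hAB
        · have hBinf : (B ∩ branch x).Infinite := by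
            rw [Set.inter_comm]; exact hABinf
          exact ⟨B, hBF', hBinf, hnotF B hBinf⟩
        · rw [hB'] at hABinf
          exact ⟨A, hAF', hABinf, hnotF A hABinf⟩
        · exact absurd (hF'.1.2 A hAF' B hBF' hAB) hABinf
    choose ch hchF' hchinf hchnotF using hEx
    have hfib : ∀ E₀ : Set L, E₀ ∈ F' → E₀ ∉ F → {x : ↥S | ch x = E₀}.Finite := by
      intro E₀ hE₀F' hE₀F
      have hdis : ∀ B ∈ 𝒜, (E₀ ∩ B).Finite := fun B hB =>
        hF'.1.2 E₀ hE₀F' B (hsubF' (Or.inl hB)) (fun h => hE₀F (h ▸ Or.inl hB))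
      have hfin := finite_branchSet_of_no_AC (hnoACof E₀ hdis)
      apply (hfin.preimage (Subtype.val_injective.injOn)).subset
      intro x hx
      simp only [Set.mem_setOf_eq] at hx
      simp only [Set.mem_preimage, Set.mem_setOf_eq, ← hx]
      exact hchinf x
    have hcover : (Set.univ : Set ↥S) = ⋃ E₀ : ↥(F' \ F), {x : ↥S | ch x = ↑E₀} := by
      ext x
      simp only [Set.mem_univ, true_iff, Set.mem_iUnion]
      exact ⟨⟨ch x, hchF' x, hchnotF x⟩, rfl⟩
    by_cases hdfin : (F' \ F).Finite
    · exfalso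
      haveI : Finite ↥(F' \ F) := hdfin
      have huf : (Set.univ : Set ↥S).Finite := by
        rw [hcover]
        exact Set.finite_iUnion (fun E₀ => hfib ↑E₀ E₀.2.1 E₀.2.2)
      have hSfin : S.Finite := Set.finite_coe_iff.mp (Set.finite_univ_iff.mp huf)
      have hlt : #(↥S) < Cardinal.aleph0 := hSfin.lt_aleph0
      rw [hScard] at hlt
      exact absurd hκ (not_le.mpr hlt)
    · haveI : Infinite ↥(F' \ F) := Set.Infinite.to_subtype hdfin
      have hdinf : Cardinal.aleph0 ≤ #(↥(F' \ F)) := Cardinal.aleph0_le_mk _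
      haveI : Nonempty ↥(F' \ F) := inferInstance
      have hle : #(↥S) ≤ #(↥(F' \ F)) * Cardinal.aleph0 := by
        rw [← Cardinal.mk_univ, hcover]
        refine (Cardinal.mk_iUnion_le _).trans ?_
        refine mul_le_mul' (le_refl _) ?_
        refine ciSup_le' ?_
        intro E₀
        exact Cardinal.mk_le_aleph0_iff.mpr
          (Set.countable_coe_iff.mpr (hfib ↑E₀ E₀.2.1 E₀.2.2).countable)
      rw [Cardinal.mul_eq_max hdinf (le_refl _), sup_eq_left.mpr hdinf] at hle
      rw [← hScard]
      exact hle

end Family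

section Transfer

variable {α β : Type} (e : α ≃ β)

def famMap (F : Set (Set α)) : Set (Set β) := (fun A => e '' A) '' F

lemma setMap_injective : Function.Injective (fun A : Set α => e '' A) :=
  Set.image_injective.mpr e.injective

lemma famMap_famMap (F : Set (Set α)) : famMap e.symm (famMap e F) = F := by
  simp only [famMap, ← Set.image_comp]
  have h : ((fun A : Set β => e.symm '' A) ∘ (fun A : Set α => e '' A)) = id := by
    funext A
    simp
  rw [h, Set.image_id]

lemma famMap_injective : Function.Injective (famMap e : Set (Set α) → Set (Set β)) :=
  Set.image_injective.mpr (setMap_injective e)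

lemma famMap_mono {F G : Set (Set α)} (h : F ⊆ G) : famMap e F ⊆ famMap e G :=
  Set.image_mono h

lemma ADFam_famMap {F : Set (Set α)} (h : ADFam α F) : ADFam β (famMap e F) := by
  constructor
  · rintro A ⟨A₀, hA₀, rfl⟩
    exact (Set.infinite_image_iff e.injective.injOn).mpr (h.1 A₀ hA₀)
  · rintro A ⟨A₀, hA₀, rfl⟩ B ⟨B₀, hB₀, rfl⟩ hAB
    have hne : A₀ ≠ B₀ := fun hh => hAB (hh ▸ rfl)
    have hfin := (h.2 A₀ hA₀ B₀ hB₀ hne).image (fun a => e a)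
    rwa [Set.image_inter e.injective] at hfin

lemma MadFam_famMap {F : Set (Set α)} (h : MadFam α F) : MadFam β (famMap e F) := by
  refine ⟨ADFam_famMap e h.1, ?_, ?_⟩
  · exact (Set.infinite_image_iff (setMap_injective e).injOn).mpr h.2.1
  · intro G' hG' hsub
    have h1 : ADFam α (famMap e.symm G') := ADFam_famMap e.symm hG'
    have h2 : F ⊆ famMap e.symm G' := by
      rw [← famMap_famMap e F]
      exact famMap_mono e.symm hsub
    have h3 := h.2.2 _ h1 h2
    have h4 : famMap e (famMap e.symm G') = G' := by
      have h5 := famMap_famMap e.symm G'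
      rwa [Equiv.symm_symm] at h5
    rw [← h4, h3]

lemma famMap_diff_mk (F G : Set (Set α)) :
    #(↥(famMap e G \ famMap e F)) = #(↥(G \ F)) := by
  rw [famMap, famMap, ← Set.image_diff (setMap_injective e)]
  exact Cardinal.mk_image_eq (setMap_injective e)

end Transfer

end APlusAux


open APlusAux in
theorem exists_almostDisjointFamily_aPlus_eq' (κ : Cardinal)
    (hκ : Cardinal.aleph0 ≤ κ) (hκc : κ ≤ Cardinal.continuum) :
    ∃ F : Set (Set ℕ), (ADFam ℕ F) ∧ F.Infinite ∧
      sInf { c : Cardinal | ∃ F' : Set (Set ℕ), MadFam ℕ F' ∧ F ⊆ F' ∧ #(↥(F' \ F)) = c } = κ := by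
  obtain ⟨Fl, hFad, hFinf, ⟨Gl, hGmad, hFGl, hGcard⟩, hlower⟩ := main_L κ hκ hκc
  set e : L ≃ ℕ := D.symm with hedef
  refine ⟨famMap e Fl, ADFam_famMap e hFad,
    (Set.infinite_image_iff (setMap_injective e).injOn).mpr hFinf, ?_⟩
  apply _root_.le_antisymm
  · exact csInf_le' ⟨famMap e Gl, MadFam_famMap e hGmad, famMap_mono e hFGl,
      (famMap_diff_mk e Fl Gl).trans hGcard⟩
  · apply le_csInf
    · exact ⟨κ, famMap e Gl, MadFam_famMap e hGmad, famMap_mono e hFGl,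
        (famMap_diff_mk e Fl Gl).trans hGcard⟩
    · rintro c ⟨F'', hmad'', hsub'', rfl⟩
      have hmadl : MadFam L (famMap e.symm F'') := MadFam_famMap e.symm hmad''
      have hsubl : Fl ⊆ famMap e.symm F'' := by
        rw [← famMap_famMap e Fl]
        exact famMap_mono e.symm hsub''
      have hlow := hlower _ hmadl hsubl
      have hcardeq : #(↥(famMap e.symm F'' \ Fl)) = #(↥(F'' \ famMap e Fl)) := by
        conv_lhs => rw [← famMap_famMap e Fl]
        exact famMap_diff_mk e.symm (famMap e Fl) F''
      rwa [hcardeq] at hlow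


/-- Every infinite cardinal `κ ≤ 2^ℵ₀` is of the form `a⁺(F)` for some infinite almost
disjoint family `F`. -/
theorem exists_almostDisjointFamily_aPlus_eq (κ : Cardinal)
    (hκ : Cardinal.aleph0 ≤ κ) (hκc : κ ≤ Cardinal.continuum) :
    ∃ F : Set (Set ℕ), AlmostDisjointFamily F ∧ F.Infinite ∧ aPlus F = κ := by
  obtain ⟨F, h1, h2, h3⟩ := exists_almostDisjointFamily_aPlus_eq' κ hκ hκc
  exact ⟨F, h1, h2, h3⟩
end

section
/- Let X be a Tychonoff space. If the space C_p(X) of continuous real-valued functions on X with the topology of pointwise convergence has the Pytkeev property, then X is zero-dimensional. -/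
open Set Filter Topology

/-- `Cp X`: the space of continuous real-valued functions on `X` with the topology of
pointwise convergence (subspace of the product `ℝ^X`). -/
def Cp (X : Type*) [TopologicalSpace X] : Type _ := {f : X → ℝ // Continuous f}

instance (X : Type*) [TopologicalSpace X] : TopologicalSpace (Cp X) :=
  instTopologicalSpaceSubtype

/-- The Pytkeev property: for every point `y` in `closure A \ A` there is a countable
family of infinite subsets of `A` forming a π-network at `y`. -/
def PytkeevProperty (Y : Type*) [TopologicalSpace Y] : Prop :=
  ∀ (y : Y) (A : Set Y), y ∈ closure A \ A →
    ∃ 𝒩 : Set (Set Y), 𝒩.Countable ∧ (∀ N ∈ 𝒩, N ⊆ A ∧ N.Infinite) ∧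
      ∀ U : Set Y, IsOpen U → y ∈ U → ∃ N ∈ 𝒩, N ⊆ U

/-- A space is zero-dimensional if it has a basis consisting of clopen sets. -/
def ZeroDimensional (X : Type*) [TopologicalSpace X] : Prop :=
  ∃ B : Set (Set X), (∀ U ∈ B, IsClopen U) ∧ TopologicalSpace.IsTopologicalBasis B

namespace CpPytAux

open MeasureTheory ENNReal

/-- The canonical "bump" function at level `m` with dip set a neighborhood of the
finite set `S`. -/
noncomputable def phi (m : ℕ) (S : Finset ℝ) (t : ℝ) : ℝ :=
  min 1 ((4 : ℝ) ^ m * max 0 (Metric.infDist t ↑S - (1 / 4 : ℝ) ^ m))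

lemma phi_continuous (m : ℕ) (S : Finset ℝ) : Continuous (phi m S) :=
  continuous_const.min (continuous_const.mul
    (continuous_const.max ((Metric.continuous_infDist_pt _).sub continuous_const)))

lemma pow_mul_pow_quarter (m : ℕ) : (4 : ℝ) ^ m * (1 / 4 : ℝ) ^ m = 1 := by
  rw [← mul_pow]; norm_num

lemma phi_eq_zero {m : ℕ} {S : Finset ℝ} {t : ℝ}
    (h : Metric.infDist t ↑S ≤ (1 / 4 : ℝ) ^ m) : phi m S t = 0 := by
  have h0 : max 0 (Metric.infDist t ↑S - (1 / 4 : ℝ) ^ m) = 0 :=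
    max_eq_left (by linarith)
  rw [phi, h0, mul_zero]
  exact min_eq_right zero_le_one

lemma exists_close_of_phi_lt_half {m : ℕ} {S : Finset ℝ} (hS : S.Nonempty) {t : ℝ}
    (h : phi m S t < 1 / 2) : ∃ s ∈ S, dist t s < 2 * (1 / 4 : ℝ) ^ m := by
  have hr : (0 : ℝ) < (1 / 4 : ℝ) ^ m := by positivity
  have h2 : (4 : ℝ) ^ m * max 0 (Metric.infDist t ↑S - (1 / 4 : ℝ) ^ m) < 1 / 2 := by
    rcases min_lt_iff.1 h with h1 | h2
    · norm_num at h1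
    · exact h2
  have h44 := pow_mul_pow_quarter m
  have hmax : max 0 (Metric.infDist t ↑S - (1 / 4 : ℝ) ^ m) < 1 / 2 * (1 / 4 : ℝ) ^ m := by
    have h' := mul_lt_mul_of_pos_right h2 hr
    calc max 0 (Metric.infDist t ↑S - (1 / 4 : ℝ) ^ m)
        = (4 : ℝ) ^ m * max 0 (Metric.infDist t ↑S - (1 / 4 : ℝ) ^ m) * (1 / 4 : ℝ) ^ m := by
          rw [mul_comm ((4 : ℝ) ^ m) _, mul_assoc, h44, mul_one]
      _ < 1 / 2 * (1 / 4 : ℝ) ^ m := h'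
  have hinf : Metric.infDist t ↑S < 2 * (1 / 4 : ℝ) ^ m := by
    have hle := le_max_right (0 : ℝ) (Metric.infDist t ↑S - (1 / 4 : ℝ) ^ m)
    nlinarith
  obtain ⟨s, hsmem, hs⟩ := (Metric.infDist_lt_iff (Finset.coe_nonempty.2 hS)).1 hinf
  exact ⟨s, by exact_mod_cast hsmem, hs⟩

lemma phi_eq_one {m : ℕ} {S : Finset ℝ} (hS : S.Nonempty) {t : ℝ}
    (h : ∀ s ∈ S, 2 * (1 / 4 : ℝ) ^ m ≤ dist t s) : phi m S t = 1 := by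
  have hr : (0 : ℝ) < (1 / 4 : ℝ) ^ m := by positivity
  have hinf : 2 * (1 / 4 : ℝ) ^ m ≤ Metric.infDist t ↑S := by
    by_contra hcon
    push_neg at hcon
    obtain ⟨s, hsmem, hs⟩ := (Metric.infDist_lt_iff (Finset.coe_nonempty.2 hS)).1 hcon
    exact absurd hs (not_lt.2 (h s (by exact_mod_cast hsmem)))
  have hmax : max 0 (Metric.infDist t ↑S - (1 / 4 : ℝ) ^ m)
      = Metric.infDist t ↑S - (1 / 4 : ℝ) ^ m := max_eq_right (by linarith)
  have h44 := pow_mul_pow_quarter m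
  have h4 : (0 : ℝ) < (4 : ℝ) ^ m := by positivity
  have hone : (1 : ℝ) ≤ (4 : ℝ) ^ m * max 0 (Metric.infDist t ↑S - (1 / 4 : ℝ) ^ m) := by
    rw [hmax]
    nlinarith
  rw [phi]
  exact min_eq_left hone

/-- The finite grid at level `m`. -/
noncomputable def grid (m : ℕ) : Finset ℝ :=
  (Finset.range (4 ^ m + 1)).image fun k : ℕ => (k : ℝ) * (1 / 4 : ℝ) ^ m

/-- Valid parameters: a finite subset of the level-`m` grid of size at most `m`. -/
def PV : Set (ℕ × Finset ℝ) := {p | p.2 ⊆ grid p.1 ∧ p.2.card ≤ p.1 ∧ p.2.Nonempty}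

lemma PV_bounded_finite (M : ℕ) : {p : ℕ × Finset ℝ | p ∈ PV ∧ p.1 < M}.Finite := by
  classical
  apply Set.Finite.subset
    (((Finset.range M).biUnion fun m => (grid m).powerset.image fun S => (m, S)) : _).finite_toSet
  rintro ⟨m, S⟩ ⟨hPV, hm⟩
  simp only [Finset.coe_biUnion, Finset.coe_image, Finset.mem_coe, Set.mem_iUnion,
    Set.mem_image, Finset.mem_range, Finset.mem_powerset, Finset.mem_coe]
  exact ⟨m, hm, S, hPV.1, rfl⟩

lemma m_quarter_le (m : ℕ) : (m : ℝ) * (1 / 4 : ℝ) ^ m ≤ (1 / 2 : ℝ) ^ m := by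
  have h1 : (m : ℝ) ≤ 2 ^ m := by
    exact_mod_cast (show m < 2 ^ m from Nat.lt_two_pow_self).le
  have h2 : (1 / 4 : ℝ) ^ m = (1 / 2 : ℝ) ^ m * (1 / 2 : ℝ) ^ m := by
    rw [← mul_pow]; norm_num
  have h3 : (2 : ℝ) ^ m * (1 / 2 : ℝ) ^ m = 1 := by
    rw [← mul_pow]; norm_num
  have hp : (0 : ℝ) ≤ (1 / 2 : ℝ) ^ m := by positivity
  calc (m : ℝ) * (1 / 4 : ℝ) ^ m
      = ((m : ℝ) * (1 / 2 : ℝ) ^ m) * (1 / 2 : ℝ) ^ m := by rw [h2]; ring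
    _ ≤ ((2 : ℝ) ^ m * (1 / 2 : ℝ) ^ m) * (1 / 2 : ℝ) ^ m := by
        exact mul_le_mul_of_nonneg_right (mul_le_mul_of_nonneg_right h1 hp) hp
    _ = (1 / 2 : ℝ) ^ m := by rw [h3, one_mul]

lemma dist_floor_le {t : ℝ} (ht : 0 ≤ t) (m : ℕ) :
    dist t (((⌊t * 4 ^ m⌋₊ : ℕ) : ℝ) * (1 / 4 : ℝ) ^ m) ≤ (1 / 4 : ℝ) ^ m := by
  have hr : (0 : ℝ) < (1 / 4 : ℝ) ^ m := by positivity
  have h44 := pow_mul_pow_quarter m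
  have hfl : ((⌊t * 4 ^ m⌋₊ : ℕ) : ℝ) ≤ t * 4 ^ m := Nat.floor_le (by positivity)
  have hfl2 : t * 4 ^ m < ((⌊t * 4 ^ m⌋₊ : ℕ) : ℝ) + 1 := Nat.lt_floor_add_one _
  have e0 : t * 4 ^ m * (1 / 4 : ℝ) ^ m = t := by rw [mul_assoc, h44, mul_one]
  have e1 : ((⌊t * 4 ^ m⌋₊ : ℕ) : ℝ) * (1 / 4 : ℝ) ^ m ≤ t := by
    have := mul_le_mul_of_nonneg_right hfl hr.le
    linarith [e0 ▸ this]
  have e2 : t < (((⌊t * 4 ^ m⌋₊ : ℕ) : ℝ) + 1) * (1 / 4 : ℝ) ^ m := by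
    have := mul_lt_mul_of_pos_right hfl2 hr
    linarith [e0 ▸ this]
  rw [Real.dist_eq, abs_le]
  constructor <;> nlinarith

/-- The canonical element of `Cp X` attached to a parameter. -/
noncomputable def qfun {X : Type*} [TopologicalSpace X] (g : X → ℝ) (hgc : Continuous g)
    (p : ℕ × Finset ℝ) : Cp X :=
  ⟨fun z => phi p.1 p.2 (g z), (phi_continuous p.1 p.2).comp hgc⟩

/-- The zero function as an element of `Cp X`. -/
def cpZero (X : Type*) [TopologicalSpace X] : Cp X := ⟨fun _ => 0, continuous_const⟩

/-- The core argument: if a Tychonoff-like map `g : X → ℝ` has range containing `(0,1)`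
and `g X ⊆ [0,1]`, then `Cp X` does not have the Pytkeev property. -/
lemma core {X : Type*} [TopologicalSpace X] (g : X → ℝ) (hgc : Continuous g)
    (hg01 : ∀ z, g z ∈ Icc (0 : ℝ) 1) (hrange : ∀ r ∈ Ioo (0 : ℝ) 1, r ∈ Set.range g)
    (hPyt : PytkeevProperty (Cp X)) : False := by
  classical
  set y₀ : Cp X := cpZero X with hy₀def
  set q : ℕ × Finset ℝ → Cp X := qfun g hgc with hqdef
  set A : Set (Cp X) := {a | (∃ p ∈ PV, q p = a) ∧ a ≠ y₀} with hAdef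
  -- Service: for every finite `F ⊆ X` there is a valid parameter whose function
  -- vanishes on `F` but is not the zero function.
  have service : ∀ F : Finset X,
      ∃ p ∈ PV, (∀ z ∈ F, phi p.1 p.2 (g z) = 0) ∧ q p ≠ y₀ := by
    intro F
    set T : Finset ℝ := insert (0 : ℝ) (F.image g) with hT
    set m : ℕ := max T.card 3 with hm
    have hm3 : 3 ≤ m := le_max_right _ _
    have hTcard : T.card ≤ m := le_max_left _ _
    have hTmem : ∀ t ∈ T, t ∈ Icc (0 : ℝ) 1 := by
      intro t ht
      rcases Finset.mem_insert.1 ht with rfl | ht'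
      · exact ⟨le_refl 0, zero_le_one⟩
      · obtain ⟨z, _, rfl⟩ := Finset.mem_image.1 ht'
        exact hg01 z
    set S : Finset ℝ := T.image (fun t => ((⌊t * 4 ^ m⌋₊ : ℕ) : ℝ) * (1 / 4 : ℝ) ^ m) with hS
    have hSgrid : S ⊆ grid m := by
      intro s hs
      obtain ⟨t, htT, rfl⟩ := Finset.mem_image.1 hs
      have ht01 := hTmem t htT
      refine Finset.mem_image.2 ⟨⌊t * 4 ^ m⌋₊, Finset.mem_range.2 ?_, rfl⟩
      have h1 : t * 4 ^ m ≤ ((4 ^ m : ℕ) : ℝ) := by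
        push_cast
        nlinarith [ht01.2, ht01.1, pow_pos (by norm_num : (0 : ℝ) < 4) m]
      have : ⌊t * 4 ^ m⌋₊ ≤ 4 ^ m := by
        calc ⌊t * 4 ^ m⌋₊ ≤ ⌊((4 ^ m : ℕ) : ℝ)⌋₊ := Nat.floor_mono h1
          _ = 4 ^ m := Nat.floor_natCast _
      omega
    have hScard : S.card ≤ m := le_trans Finset.card_image_le hTcard
    have hSne : S.Nonempty :=
      Finset.Nonempty.image ⟨0, Finset.mem_insert_self _ _⟩ _
    have hpPV : (m, S) ∈ PV := ⟨hSgrid, hScard, hSne⟩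
    have hzero : ∀ z ∈ F, phi m S (g z) = 0 := by
      intro z hz
      have htT : g z ∈ T := Finset.mem_insert_of_mem (Finset.mem_image_of_mem g hz)
      have hsS : ((⌊g z * 4 ^ m⌋₊ : ℕ) : ℝ) * (1 / 4 : ℝ) ^ m ∈ S :=
        Finset.mem_image_of_mem _ htT
      apply phi_eq_zero
      calc Metric.infDist (g z) ↑S
          ≤ dist (g z) (((⌊g z * 4 ^ m⌋₊ : ℕ) : ℝ) * (1 / 4 : ℝ) ^ m) :=
            Metric.infDist_le_dist_of_mem (by exact_mod_cast hsS)
        _ ≤ (1 / 4 : ℝ) ^ m := dist_floor_le (hg01 z).1 m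
    -- far point: a point of (0,1) far from all grid points of S
    have hfar : ∃ t₀ ∈ Ioo (0 : ℝ) 1, ∀ s ∈ S, 2 * (1 / 4 : ℝ) ^ m ≤ dist t₀ s := by
      by_contra hcon
      push_neg at hcon
      have hsub : Ioo (0 : ℝ) 1 ⊆ ⋃ s ∈ S, Metric.ball s (2 * (1 / 4 : ℝ) ^ m) := by
        intro t ht
        obtain ⟨s, hsS, hds⟩ := hcon t ht
        exact Set.mem_biUnion hsS (Metric.mem_ball.2 hds)
      have hvol : volume (Ioo (0 : ℝ) 1)
          ≤ ∑ s ∈ S, volume (Metric.ball s (2 * (1 / 4 : ℝ) ^ m)) :=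
        le_trans (measure_mono hsub) (measure_biUnion_finset_le _ _)
      have hball : ∀ s ∈ S, volume (Metric.ball s (2 * (1 / 4 : ℝ) ^ m))
          = ENNReal.ofReal (4 * (1 / 4 : ℝ) ^ m) := by
        intro s _
        rw [Real.volume_ball]
        ring_nf
      rw [Finset.sum_congr rfl hball, Finset.sum_const, Real.volume_Ioo] at hvol
      have hineq : (S.card : ℝ) * (4 * (1 / 4 : ℝ) ^ m) ≤ 1 / 2 := by
        have hq := m_quarter_le m
        have hc : (S.card : ℝ) ≤ (m : ℝ) := by exact_mod_cast hScard
        have hrq : (0 : ℝ) ≤ (1 / 4 : ℝ) ^ m := by positivity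
        have hhalf : ((1 : ℝ) / 2) ^ m ≤ (1 / 2) ^ 3 :=
          pow_le_pow_of_le_one (by norm_num) (by norm_num) hm3
        have step1 : (S.card : ℝ) * (1 / 4 : ℝ) ^ m ≤ (m : ℝ) * (1 / 4 : ℝ) ^ m :=
          mul_le_mul_of_nonneg_right hc hrq
        nlinarith
      have hle : ENNReal.ofReal ((1:ℝ) - 0) ≤ ENNReal.ofReal (1 / 2) := by
        calc ENNReal.ofReal ((1:ℝ) - 0)
            ≤ S.card • ENNReal.ofReal (4 * (1 / 4 : ℝ) ^ m) := hvol
          _ = (S.card : ℝ≥0∞) * ENNReal.ofReal (4 * (1 / 4 : ℝ) ^ m) := by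
              rw [nsmul_eq_mul]
          _ = ENNReal.ofReal ((S.card : ℝ) * (4 * (1 / 4 : ℝ) ^ m)) := by
              rw [← ENNReal.ofReal_natCast S.card, ← ENNReal.ofReal_mul (Nat.cast_nonneg _)]
          _ ≤ ENNReal.ofReal (1 / 2) := ENNReal.ofReal_le_ofReal hineq
      rw [ENNReal.ofReal_le_ofReal_iff (by norm_num)] at hle
      norm_num at hle
    obtain ⟨t₀, ht₀, hfar₀⟩ := hfar
    obtain ⟨x₀, hx₀⟩ := hrange t₀ ht₀
    refine ⟨(m, S), hpPV, hzero, ?_⟩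
    intro hq0
    have h1 : (q (m, S)).1 x₀ = (y₀ : Cp X).1 x₀ := by rw [hq0]
    have h2 : phi m S (g x₀) = 0 := h1
    rw [hx₀, phi_eq_one hSne hfar₀] at h2
    norm_num at h2
  -- y₀ is in the closure of A
  have hy₀A : y₀ ∉ A := fun h => h.2 rfl
  have hclos : y₀ ∈ closure A := by
    rw [mem_closure_iff_nhds]
    intro V hV
    have hnhds : 𝓝 y₀ = Filter.comap (Subtype.val) (𝓝 (y₀.1)) := nhds_induced _ _
    rw [hnhds] at hV
    obtain ⟨W, hW, hWsub⟩ := Filter.mem_comap.1 hV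
    rw [nhds_pi] at hW
    obtain ⟨F, Vs, hVs, hVsub⟩ := Filter.mem_pi'.1 hW
    obtain ⟨p, hpPV, hpz, hpne⟩ := service F
    refine ⟨q p, hWsub ?_, ⟨p, hpPV, rfl⟩, hpne⟩
    show (q p).1 ∈ W
    apply hVsub
    intro i hi
    show (q p).1 i ∈ Vs i
    have : (q p).1 i = phi p.1 p.2 (g i) := rfl
    rw [this, hpz i hi]
    exact mem_of_mem_nhds (hVs i)
  -- Apply the Pytkeev property
  obtain ⟨𝒩, hcnt, hmem, hnet⟩ := hPyt y₀ A ⟨hclos, hy₀A⟩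
  -- the "joint smallness" sets on the real line
  set TN : Set (Cp X) → Set ℝ :=
    fun N => {t | ∀ p ∈ PV, q p ∈ N → phi p.1 p.2 t < 1 / 2} with hTNdef
  have hnull : ∀ N ∈ 𝒩, volume (TN N) = 0 := by
    intro N hN
    -- parameters representing elements of N have unbounded levels
    have hub : ∀ M : ℕ, ∃ p, p ∈ PV ∧ q p ∈ N ∧ M ≤ p.1 := by
      intro M
      by_contra hcon
      push_neg at hcon
      have hsub : N ⊆ q '' {p : ℕ × Finset ℝ | p ∈ PV ∧ p.1 < M} := by
        intro a ha
        obtain ⟨⟨p, hp, rfl⟩, -⟩ := (hmem N hN).1 ha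
        exact ⟨p, ⟨hp, hcon p hp ha⟩, rfl⟩
      exact (hmem N hN).2 (((PV_bounded_finite M).image q).subset hsub)
    have hbound : ∀ M : ℕ, volume (TN N) ≤ ENNReal.ofReal (4 * (1 / 2 : ℝ) ^ M) := by
      intro M
      obtain ⟨p, hpPV, hpN, hpM⟩ := hub M
      have hsub : TN N ⊆ ⋃ s ∈ p.2, Metric.ball s (2 * (1 / 4 : ℝ) ^ p.1) := by
        intro t ht
        obtain ⟨s, hs, hds⟩ := exists_close_of_phi_lt_half hpPV.2.2 (ht p hpPV hpN)
        exact Set.mem_biUnion hs (Metric.mem_ball.2 hds)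
      have hball : ∀ s ∈ p.2, volume (Metric.ball s (2 * (1 / 4 : ℝ) ^ p.1))
          = ENNReal.ofReal (4 * (1 / 4 : ℝ) ^ p.1) := by
        intro s _
        rw [Real.volume_ball]
        ring_nf
      have hineq : (p.2.card : ℝ) * (4 * (1 / 4 : ℝ) ^ p.1) ≤ 4 * (1 / 2 : ℝ) ^ M := by
        have hq := m_quarter_le p.1
        have hc : (p.2.card : ℝ) ≤ (p.1 : ℝ) := by exact_mod_cast hpPV.2.1
        have hrq : (0 : ℝ) ≤ (1 / 4 : ℝ) ^ p.1 := by positivity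
        have hhalf : ((1 : ℝ) / 2) ^ p.1 ≤ (1 / 2) ^ M :=
          pow_le_pow_of_le_one (by norm_num) (by norm_num) hpM
        have step1 : (p.2.card : ℝ) * (1 / 4 : ℝ) ^ p.1 ≤ (p.1 : ℝ) * (1 / 4 : ℝ) ^ p.1 :=
          mul_le_mul_of_nonneg_right hc hrq
        nlinarith
      calc volume (TN N)
          ≤ ∑ s ∈ p.2, volume (Metric.ball s (2 * (1 / 4 : ℝ) ^ p.1)) :=
            le_trans (measure_mono hsub) (measure_biUnion_finset_le _ _)
        _ = p.2.card • ENNReal.ofReal (4 * (1 / 4 : ℝ) ^ p.1) := by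
            rw [Finset.sum_congr rfl hball, Finset.sum_const]
        _ = (p.2.card : ℝ≥0∞) * ENNReal.ofReal (4 * (1 / 4 : ℝ) ^ p.1) := by
            rw [nsmul_eq_mul]
        _ = ENNReal.ofReal ((p.2.card : ℝ) * (4 * (1 / 4 : ℝ) ^ p.1)) := by
            rw [← ENNReal.ofReal_natCast p.2.card, ← ENNReal.ofReal_mul (Nat.cast_nonneg _)]
        _ ≤ ENNReal.ofReal (4 * (1 / 2 : ℝ) ^ M) := ENNReal.ofReal_le_ofReal hineq
    have htend : Tendsto (fun M : ℕ => ENNReal.ofReal (4 * (1 / 2 : ℝ) ^ M))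
        atTop (𝓝 0) := by
      have h1 : Tendsto (fun M : ℕ => 4 * (1 / 2 : ℝ) ^ M) atTop (𝓝 0) := by
        have h0 := tendsto_pow_atTop_nhds_zero_of_lt_one
          (by norm_num : (0 : ℝ) ≤ 1 / 2) (by norm_num : (1 / 2 : ℝ) < 1)
        have := h0.const_mul (4 : ℝ)
        simpa using this
      have h2 := ENNReal.tendsto_ofReal h1
      simpa using h2
    exact le_antisymm (ge_of_tendsto' htend hbound) zero_le
  have hZ : volume (⋃ N ∈ 𝒩, TN N) = 0 := (measure_biUnion_null_iff hcnt).2 hnull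
  have hex : ∃ t ∈ Ioo (0 : ℝ) 1, t ∉ ⋃ N ∈ 𝒩, TN N := by
    by_contra hcon
    push_neg at hcon
    have h1 : volume (Ioo (0 : ℝ) 1) = 0 :=
      measure_mono_null (fun t ht => hcon t ht) hZ
    rw [Real.volume_Ioo] at h1
    norm_num at h1
  obtain ⟨t₀, ht₀, ht₀Z⟩ := hex
  obtain ⟨x₀, hx₀⟩ := hrange t₀ ht₀
  set Ustar : Set (Cp X) := (fun a : Cp X => a.1 x₀) ⁻¹' (Ioo (-(1 / 2) : ℝ) (1 / 2))
    with hUdef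
  have hUOpen : IsOpen Ustar :=
    isOpen_Ioo.preimage ((continuous_apply x₀).comp continuous_subtype_val)
  have hUy : y₀ ∈ Ustar := by
    show (y₀ : Cp X).1 x₀ ∈ Ioo (-(1 / 2) : ℝ) (1 / 2)
    show (0 : ℝ) ∈ Ioo (-(1 / 2) : ℝ) (1 / 2)
    constructor <;> norm_num
  obtain ⟨N, hN𝒩, hNsub⟩ := hnet Ustar hUOpen hUy
  apply ht₀Z
  refine Set.mem_biUnion hN𝒩 ?_
  intro p hpPV hpN
  have hmemU : q p ∈ Ustar := hNsub hpN
  have h2 : phi p.1 p.2 (g x₀) < 1 / 2 := hmemU.2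
  rwa [hx₀] at h2

end CpPytAux

theorem pytkeev_of_Cp_implies_zero_dimensional
    (X : Type*) [TopologicalSpace X] [T35Space X]
    (hPyt : PytkeevProperty (Cp X)) :
    ZeroDimensional X := by
  classical
  refine ⟨{W : Set X | IsClopen W}, fun U hU => hU, ?_⟩
  apply TopologicalSpace.isTopologicalBasis_of_isOpen_of_nhds (fun u hu => hu.2)
  intro x U hxU hUopen
  obtain ⟨f, hfc, hfx, hfK⟩ :=
    CompletelyRegularSpace.completely_regular x Uᶜ hUopen.isClosed_compl (by simp [hxU])
  set g : X → ℝ := fun z => ((f z : unitInterval) : ℝ) with hgdef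
  have hgc : Continuous g := continuous_subtype_val.comp hfc
  have hg01 : ∀ z, g z ∈ Icc (0 : ℝ) 1 := fun z => (f z).2
  have hgx : g x = 0 := by
    show ((f x : unitInterval) : ℝ) = 0
    rw [hfx]
    rfl
  have hgK : ∀ z, z ∉ U → g z = 1 := by
    intro z hz
    show ((f z : unitInterval) : ℝ) = 1
    rw [hfK hz]
    rfl
  by_cases hcase : ∃ r ∈ Ioo (0 : ℝ) 1, r ∉ Set.range g
  · obtain ⟨r, hr, hrng⟩ := hcase
    refine ⟨g ⁻¹' Iio r, ⟨?_, isOpen_Iio.preimage hgc⟩, ?_, ?_⟩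
    · have heq : g ⁻¹' Iio r = g ⁻¹' Iic r := by
        ext z
        simp only [Set.mem_preimage, Set.mem_Iio, Set.mem_Iic]
        constructor
        · exact fun h => le_of_lt h
        · intro h
          exact lt_of_le_of_ne h (fun he => hrng ⟨z, he⟩)
      rw [heq]
      exact isClosed_Iic.preimage hgc
    · show g x < r
      rw [hgx]
      exact hr.1
    · intro z hz
      by_contra hzU
      have h1 : g z = 1 := hgK z hzU
      have h2 : g z < r := hz
      rw [h1] at h2
      linarith [hr.2]
  · push_neg at hcase
    exact (CpPytAux.core g hgc hg01 hcase hPyt).elim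
end
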